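/- arXiv:2310.13821 — 6 statements merged into one kernel-verified Lean document; each statement's English description precedes it below -/
import Mathlib

section
/- Let X be a set and let k : X × X → ℂ be a kernel (a Hermitian map, i.e. k(y,x) = conj(k(x,y)) for all x,y ∈ X). Then k admits a positive decomposition, i.e. k = k₊ − k₋ with k₊ and k₋ positive definite kernels, if and only if there exist a complex Hilbert space V, a map Φ : X → V, and a self-adjoint unitary operator J : V → V (a fundamental symmetry) such that k(x,y) = ⟨J Φ(x), Φ(y)⟩ for all x,y ∈ X. -/
open scoped ComplexOrder InnerProductSpace

/-- A kernel is positive definite if all its Gram-type sums are nonnegative. -/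
def IsPDKernel {X : Type} (k : X → X → ℂ) : Prop :=
  ∀ (N : ℕ) (x : Fin N → X) (c : Fin N → ℂ),
    0 ≤ ∑ i, ∑ j, (starRingEnd ℂ) (c i) * c j * k (x i) (x j)

lemma pd_im_zero {z : ℂ} (h : 0 ≤ z) : z.im = 0 := by
  rw [Complex.le_def] at h; simpa using h.2.symm

lemma IsPDKernel.hermitian {X : Type} {k : X → X → ℂ} (h : IsPDKernel k) (x y : X) :
    k y x = (starRingEnd ℂ) (k x y) := by
  have hxx := pd_im_zero (h 1 ![x] ![1])
  have hyy := pd_im_zero (h 1 ![y] ![1])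
  have h2 := pd_im_zero (h 2 ![x, y] ![1, 1])
  have h3 := pd_im_zero (h 2 ![x, y] ![1, Complex.I])
  simp [Fin.sum_univ_two, Fin.sum_univ_one, Complex.ext_iff, Complex.add_im,
    Complex.mul_im, Complex.mul_re] at hxx hyy h2 h3 ⊢
  constructor <;> linarith

lemma exists_feature_map {X : Type} {k : X → X → ℂ} (hpd : IsPDKernel k) :
    ∃ (H : Type) (_ : NormedAddCommGroup H) (_ : InnerProductSpace ℂ H)
      (_ : CompleteSpace H) (φ : X → H), ∀ x y, ⟪φ x, φ y⟫_ℂ = k x y := by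
  classical
  set E := (X →₀ ℂ) with hE
  set inn : E → E → ℂ :=
    fun f g => f.sum fun x a => g.sum fun y b => (starRingEnd ℂ) a * b * k x y with hinn
  have inn_ff : ∀ f : E, inn f f =
      ∑ x ∈ f.support, ∑ y ∈ f.support, (starRingEnd ℂ) (f x) * f y * k x y := by
    intro f; rfl
  have nonneg : ∀ f : E, 0 ≤ inn f f := by
    intro f
    rw [inn_ff]
    set s := f.support with hs
    have e := s.equivFin
    have key : (∑ x ∈ s, ∑ y ∈ s, (starRingEnd ℂ) (f x) * f y * k x y)
        = ∑ i : Fin s.card, ∑ j : Fin s.card,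
            (starRingEnd ℂ) (f (e.symm i)) * f (e.symm j) * k (e.symm i) (e.symm j) := by
      rw [← Finset.sum_coe_sort s, ← Equiv.sum_comp e.symm]
      refine Finset.sum_congr rfl fun i _ => ?_
      rw [← Finset.sum_coe_sort s, ← Equiv.sum_comp e.symm]
    rw [key]
    exact hpd s.card (fun i => (e.symm i : X)) (fun i => f (e.symm i))
  letI core : PreInnerProductSpace.Core ℂ E :=
  { inner := inn
    conj_inner_symm := by
      intro f g
      rw [hinn]
      simp only [Finsupp.sum, map_sum]
      rw [Finset.sum_comm]
      refine Finset.sum_congr rfl fun x _ => Finset.sum_congr rfl fun y _ => ?_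
      simp only [map_mul, RingHomCompTriple.comp_apply, RingHom.id_apply, starRingEnd_self_apply]
      rw [← hpd.hermitian]
      ring
    re_inner_nonneg := fun f => by
      have h := nonneg f
      rw [Complex.le_def] at h
      simpa using h.1
    add_left := by
      intro f g h
      rw [hinn]
      simp only []
      rw [Finsupp.sum_add_index']
      · intro x; simp
      · intro x a a'; simp [add_mul, Finsupp.sum_add]
    smul_left := by
      intro f g r
      rw [hinn]
      simp only []
      rw [Finsupp.sum_smul_index']
      · rw [Finsupp.mul_sum]
        refine Finsupp.sum_congr fun x _ => ?_
        rw [Finsupp.mul_sum]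
        refine Finsupp.sum_congr fun y _ => ?_
        simp [map_mul]; ring
      · intro x; simp }
  letI : SeminormedAddCommGroup E := InnerProductSpace.Core.toSeminormedAddCommGroup (𝕜 := ℂ)
  letI : NormedSpace ℂ E := InnerProductSpace.Core.toNormedSpace (𝕜 := ℂ)
  letI : InnerProductSpace ℂ E :=
  { core with
    norm_sq_eq_re_inner := fun f => by
      have hn : ‖f‖ = Real.sqrt (RCLike.re (core.inner f f)) := rfl
      rw [hn, Real.sq_sqrt (core.re_inner_nonneg f)] }
  refine ⟨UniformSpace.Completion E, inferInstance, inferInstance, inferInstance,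
    fun x => ((Finsupp.single x 1 : E) : UniformSpace.Completion E), fun x y => ?_⟩
  rw [UniformSpace.Completion.inner_coe]
  show inn (Finsupp.single x 1) (Finsupp.single y 1) = k x y
  rw [hinn]
  simp only []
  rw [Finsupp.sum_single_index, Finsupp.sum_single_index] <;> simp

lemma aux_pd {X : Type} {V : Type} [NormedAddCommGroup V] [InnerProductSpace ℂ V]
    (J : V →L[ℂ] V)
    (hsa : ∀ u w : V, ⟪J u, w⟫_ℂ = ⟪u, J w⟫_ℂ)
    (hunit : ∀ u w : V, ⟪J u, J w⟫_ℂ = ⟪u, w⟫_ℂ)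
    (Φ : X → V) (ε : ℂ) (hε : ε = 1 ∨ ε = -1) :
    IsPDKernel (fun x y => (⟪Φ x, Φ y⟫_ℂ + ε * ⟪J (Φ x), Φ y⟫_ℂ) / 2) := by
  intro N x c
  set v : V := ∑ i, c i • Φ (x i) with hv
  have h1 : ⟪v, v⟫_ℂ = ∑ i, ∑ j, (starRingEnd ℂ) (c i) * c j * ⟪Φ (x i), Φ (x j)⟫_ℂ := by
    rw [hv, sum_inner]
    refine Finset.sum_congr rfl fun i _ => ?_
    rw [inner_smul_left, inner_sum, Finset.mul_sum]
    refine Finset.sum_congr rfl fun j _ => ?_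
    rw [inner_smul_right]; ring
  have h2 : ⟪J v, v⟫_ℂ = ∑ i, ∑ j, (starRingEnd ℂ) (c i) * c j * ⟪J (Φ (x i)), Φ (x j)⟫_ℂ := by
    rw [hv, map_sum, sum_inner]
    refine Finset.sum_congr rfl fun i _ => ?_
    rw [map_smul, inner_smul_left, inner_sum, Finset.mul_sum]
    refine Finset.sum_congr rfl fun j _ => ?_
    rw [inner_smul_right]; ring
  have hsum : (∑ i, ∑ j, (starRingEnd ℂ) (c i) * c j *
      ((⟪Φ (x i), Φ (x j)⟫_ℂ + ε * ⟪J (Φ (x i)), Φ (x j)⟫_ℂ) / 2))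
      = (⟪v, v⟫_ℂ + ε * ⟪J v, v⟫_ℂ) / 2 := by
    rw [h1, h2, Finset.mul_sum, ← Finset.sum_add_distrib, Finset.sum_div]
    refine Finset.sum_congr rfl fun i _ => ?_
    rw [Finset.mul_sum, ← Finset.sum_add_distrib, Finset.sum_div]
    refine Finset.sum_congr rfl fun j _ => ?_
    ring
  rw [hsum]
  -- facts about r := ⟪J v, v⟫
  set r : ℂ := ⟪J v, v⟫_ℂ with hr
  have him : r.im = 0 := by
    have : (starRingEnd ℂ) r = r := by
      rw [hr, inner_conj_symm, ← hsa]
    have := congrArg Complex.im this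
    simp at this
    linarith
  have hnormJ : ‖J v‖ = ‖v‖ := by
    rw [@norm_eq_sqrt_re_inner ℂ, @norm_eq_sqrt_re_inner ℂ V, hunit]
  have hbound : ‖r‖ ≤ ‖v‖ ^ 2 := by
    calc ‖r‖ = ‖(⟪J v, v⟫_ℂ)‖ := rfl
      _ ≤ ‖J v‖ * ‖v‖ := norm_inner_le_norm _ _
      _ = ‖v‖ ^ 2 := by rw [hnormJ]; ring
  have hre : |r.re| ≤ ‖v‖ ^ 2 := (Complex.abs_re_le_norm r).trans hbound
  have hvv : ⟪v, v⟫_ℂ = ((‖v‖ : ℂ)) ^ 2 := by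
    rw [inner_self_eq_norm_sq_to_K]; norm_cast
  have h0 : (0 : ℂ) ≤ ⟪v, v⟫_ℂ + ε * r := by
    rw [hvv, Complex.le_def]
    rcases hε with h | h <;> subst h <;>
      constructor <;>
      simp [Complex.add_re, Complex.add_im, Complex.mul_re, Complex.mul_im, him,
        ← Complex.ofReal_pow] <;>
      cases abs_le.mp hre <;> linarith
  have h2le : (0 : ℂ) ≤ (1/2 : ℂ) := by
    rw [Complex.le_def]; norm_num
  calc (0:ℂ) = (1/2 : ℂ) * 0 := by ring
    _ ≤ (1/2 : ℂ) * (⟪v, v⟫_ℂ + ε * r) := by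
        exact mul_le_mul_of_nonneg_left h0 h2le
    _ = (⟪v, v⟫_ℂ + ε * r) / 2 := by ring

/-- a Hermitian kernel admits a positive decomposition iff it is of the
form `k x y = ⟪J (Φ x), Φ y⟫` for some Hilbert space `V`, map `Φ : X → V`, and
self-adjoint unitary (fundamental symmetry) `J` on `V`. -/
theorem positive_decomposition_iff_fundamental_symmetry
    {X : Type} (k : X → X → ℂ)
    (hk : ∀ x y, k y x = (starRingEnd ℂ) (k x y)) :
    (∃ kp km : X → X → ℂ, IsPDKernel kp ∧ IsPDKernel km ∧
        ∀ x y, k x y = kp x y - km x y) ↔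
      ∃ (V : Type) (_ : NormedAddCommGroup V) (_ : InnerProductSpace ℂ V)
        (_ : CompleteSpace V) (Φ : X → V) (J : V →L[ℂ] V),
        (∀ u w : V, ⟪J u, w⟫_ℂ = ⟪u, J w⟫_ℂ) ∧
        (∀ u w : V, ⟪J u, J w⟫_ℂ = ⟪u, w⟫_ℂ) ∧
        Function.Surjective J ∧
        ∀ x y, k x y = ⟪J (Φ x), Φ y⟫_ℂ := by
  constructor
  · rintro ⟨kp, km, hp, hm, hdec⟩
    obtain ⟨H₁, i1, i2, i3, φ₁, hφ₁⟩ := exists_feature_map hp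
    obtain ⟨H₂, j1, j2, j3, φ₂, hφ₂⟩ := exists_feature_map hm
    set V := WithLp 2 (H₁ × H₂) with hV
    set L := WithLp.prodContinuousLinearEquiv 2 ℂ H₁ H₂ with hL
    set J : V →L[ℂ] V :=
      (L.symm : H₁ × H₂ →L[ℂ] V).comp
        (((ContinuousLinearMap.id ℂ H₁).prodMap (-(ContinuousLinearMap.id ℂ H₂))).comp
          (L : V →L[ℂ] H₁ × H₂)) with hJ
    have hJap : ∀ v : V, J v = (WithLp.equiv 2 (H₁ × H₂)).symm (v.fst, -v.snd) := by
      intro v; rfl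
    have hfst : ∀ v : V, (J v).ofLp.fst = v.ofLp.fst := fun v => by rw [hJap]; rfl
    have hsnd : ∀ v : V, (J v).ofLp.snd = -v.ofLp.snd := fun v => by rw [hJap]; rfl
    refine ⟨V, inferInstance, inferInstance, inferInstance,
      fun x => (WithLp.equiv 2 (H₁ × H₂)).symm (φ₁ x, φ₂ x), J, ?_, ?_, ?_, ?_⟩
    · intro u w
      rw [WithLp.prod_inner_apply, WithLp.prod_inner_apply, hfst, hsnd, hfst, hsnd,
        inner_neg_left, inner_neg_right]
    · intro u w
      rw [WithLp.prod_inner_apply, WithLp.prod_inner_apply, hfst, hsnd, hfst, hsnd,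
        inner_neg_left, inner_neg_right, neg_neg]
    · intro v
      refine ⟨J v, ?_⟩
      rw [hJap, hJap]
      apply (WithLp.equiv 2 (H₁ × H₂)).injective
      apply Prod.ext <;> simp
    · intro x y
      rw [WithLp.prod_inner_apply, hfst, hsnd]
      have e1 : ((WithLp.equiv 2 (H₁ × H₂)).symm (φ₁ x, φ₂ x)).ofLp.fst = φ₁ x := rfl
      have e2 : ((WithLp.equiv 2 (H₁ × H₂)).symm (φ₁ x, φ₂ x)).ofLp.snd = φ₂ x := rfl
      have e3 : ((WithLp.equiv 2 (H₁ × H₂)).symm (φ₁ y, φ₂ y)).ofLp.fst = φ₁ y := rfl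
      have e4 : ((WithLp.equiv 2 (H₁ × H₂)).symm (φ₁ y, φ₂ y)).ofLp.snd = φ₂ y := rfl
      rw [e1, e2, e3, e4, inner_neg_left, hφ₁, hφ₂, hdec]
      ring
  · rintro ⟨V, i1, i2, i3, Φ, J, hsa, hunit, hsurj, hrep⟩
    refine ⟨fun x y => (⟪Φ x, Φ y⟫_ℂ + 1 * ⟪J (Φ x), Φ y⟫_ℂ) / 2,
      fun x y => (⟪Φ x, Φ y⟫_ℂ + (-1) * ⟪J (Φ x), Φ y⟫_ℂ) / 2,
      aux_pd J hsa hunit Φ 1 (Or.inl rfl),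
      aux_pd J hsa hunit Φ (-1) (Or.inr rfl),
      fun x y => ?_⟩
    rw [hrep]
    ring
end

section
/- Let G be a locally compact Hausdorff topological group and H a compact subgroup. Suppose f : G → ℂ is continuous, invariant on double cosets (f(hgh') = f(g) for all g ∈ G, h,h' ∈ H), and admits a continuous positive decomposition f = f₊ − f₋ with f₊, f₋ continuous positive definite functions on G. Then f admits a continuous positive decomposition into double-coset-invariant functions: there exist continuous PD functions f₊', f₋' : G → ℂ satisfying f₊'(hgh') = f₊'(g) and f₋'(hgh') = f₋'(g) for all g ∈ G, h,h' ∈ H, with f = f₊' − f₋'. -/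
open scoped ComplexOrder

/-- A function on a group is positive definite if all the matrices
`(f(gᵢ⁻¹gⱼ))ᵢⱼ` are positive semidefinite. -/
def IsPDFun {G : Type} [Group G] (f : G → ℂ) : Prop :=
  ∀ (N : ℕ) (g : Fin N → G) (c : Fin N → ℂ),
    0 ≤ ∑ i, ∑ j, (starRingEnd ℂ) (c i) * c j * f ((g i)⁻¹ * g j)

/-- A function on `G` is invariant on double cosets of `H` if
`f(hgh') = f(g)` for all `h, h' ∈ H`. -/
def IsDosetInvariant {G : Type} [Group G] (H : Subgroup G) (f : G → ℂ) : Prop :=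
  ∀ (g : G), ∀ h ∈ H, ∀ h' ∈ H, f (h * g * h') = f g

open MeasureTheory Set Filter Uniformity Topology

lemma continuous_integrable_aux {X : Type} [TopologicalSpace X] [CompactSpace X]
    [MeasurableSpace X] [OpensMeasurableSpace X] (μ : Measure X) [IsFiniteMeasure μ]
    {f : X → ℂ} (hf : Continuous f) : Integrable f μ := by
  rw [← integrableOn_univ]
  exact hf.continuousOn.integrableOn_compact' isCompact_univ MeasurableSet.univ

lemma nonneg_of_forall_close {z : ℂ} (h : ∀ ε : ℝ, 0 < ε → ∃ s : ℂ, 0 ≤ s ∧ ‖z - s‖ ≤ ε) :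
    0 ≤ z := by
  have him : z.im = 0 := by
    by_contra hne
    obtain ⟨s, hs0, hs⟩ := h (|z.im| / 2) (by positivity)
    have hsim : s.im = 0 := ((Complex.le_def.mp hs0).2).symm
    have h1 : |z.im| ≤ ‖z - s‖ := by
      have := Complex.abs_im_le_norm (z - s)
      simpa [Complex.sub_im, hsim] using this
    have : (0:ℝ) < |z.im| := abs_pos.mpr hne
    linarith
  have hre : 0 ≤ z.re := by
    by_contra hlt
    push_neg at hlt
    obtain ⟨s, hs0, hs⟩ := h (-z.re / 2) (by linarith)
    have hsre : 0 ≤ s.re := by simpa using (Complex.le_def.mp hs0).1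
    have h1 : |z.re - s.re| ≤ ‖z - s‖ := by
      have := Complex.abs_re_le_norm (z - s)
      simpa [Complex.sub_re] using this
    have h2 : s.re - z.re ≤ |z.re - s.re| := by
      rw [abs_sub_comm]; exact le_abs_self _
    linarith
  rw [Complex.le_def]
  constructor
  · simpa using hre
  · simpa using him.symm

lemma continuous_parametric_integral {α X : Type} [TopologicalSpace α] [TopologicalSpace X]
    [CompactSpace X] [MeasurableSpace X] [OpensMeasurableSpace X]
    (μ : Measure X) [IsFiniteMeasure μ] {F : α × X → ℂ} (hF : Continuous F) :
    Continuous fun a => ∫ x, F (a, x) ∂μ := by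
  rw [continuous_iff_continuousAt]
  intro a₀
  rw [ContinuousAt, Metric.tendsto_nhds]
  intro ε hε
  set T : ℝ := (μ univ).toReal with hT
  have hT0 : 0 ≤ T := ENNReal.toReal_nonneg
  set δ : ℝ := ε / (T + 1) with hδdef
  have hδ : 0 < δ := by positivity
  have hΦ : Continuous fun p : α × X => ‖F p - F (a₀, p.2)‖ :=
    (hF.sub (hF.comp (continuous_const.prodMk continuous_snd))).norm
  have hWopen : IsOpen {p : α × X | ‖F p - F (a₀, p.2)‖ < δ} :=
    isOpen_lt hΦ continuous_const
  have hWsub : ({a₀} : Set α) ×ˢ (univ : Set X) ⊆ {p : α × X | ‖F p - F (a₀, p.2)‖ < δ} := by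
    rintro ⟨a, x⟩ ⟨ha, -⟩
    simp only [mem_singleton_iff] at ha
    subst ha
    simp [hδ]
  obtain ⟨u, v, hu_open, _, hau, hxv, huv⟩ :=
    generalized_tube_lemma isCompact_singleton isCompact_univ hWopen hWsub
  have hu_mem : u ∈ 𝓝 a₀ := hu_open.mem_nhds (hau rfl)
  filter_upwards [hu_mem] with a ha
  have hint : ∀ b : α, Integrable (fun x => F (b, x)) μ :=
    fun b => continuous_integrable_aux μ (hF.comp (Continuous.prodMk_right b))
  have hsub : (∫ x, F (a, x) ∂μ) - (∫ x, F (a₀, x) ∂μ) = ∫ x, (F (a, x) - F (a₀, x)) ∂μ :=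
    (integral_sub (hint a) (hint a₀)).symm
  have hbd : ∀ᵐ x ∂μ, ‖F (a, x) - F (a₀, x)‖ ≤ δ := by
    refine Eventually.of_forall fun x => ?_
    have : (a, x) ∈ u ×ˢ v := ⟨ha, hxv (mem_univ x)⟩
    exact le_of_lt (huv this)
  have hnorm : ‖(∫ x, F (a, x) ∂μ) - (∫ x, F (a₀, x) ∂μ)‖ ≤ δ * T := by
    rw [hsub]
    exact norm_integral_le_of_norm_le_const hbd
  rw [dist_eq_norm]
  have : δ * T < ε := by
    rw [hδdef]
    rw [div_mul_eq_mul_div]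
    rw [div_lt_iff₀ (by linarith)]
    nlinarith
  linarith

lemma IsPDFun.fintype {G : Type} [Group G] {f : G → ℂ} (hf : IsPDFun f)
    (ι : Type) [Fintype ι] (g : ι → G) (c : ι → ℂ) :
    0 ≤ ∑ k, ∑ l, (starRingEnd ℂ) (c k) * c l * f ((g k)⁻¹ * g l) := by
  classical
  let e := (Fintype.equivFin ι).symm
  calc (0:ℂ) ≤ ∑ a, ∑ b, (starRingEnd ℂ) ((c ∘ e) a) * (c ∘ e) b * f (((g ∘ e) a)⁻¹ * (g ∘ e) b) :=
        hf (Fintype.card ι) (g ∘ e) (c ∘ e)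
    _ = ∑ k, ∑ l, (starRingEnd ℂ) (c k) * c l * f ((g k)⁻¹ * g l) := by
        rw [← Equiv.sum_comp e (fun k => ∑ l, (starRingEnd ℂ) (c k) * c l * f ((g k)⁻¹ * g l))]
        exact Finset.sum_congr rfl fun a _ =>
          Equiv.sum_comp e (fun l => (starRingEnd ℂ) (c (e a)) * c l * f ((g (e a))⁻¹ * g l))

set_option maxHeartbeats 1000000 in
lemma integral_integral_nonneg_of_psd_kernel {X : Type} [TopologicalSpace X] [CompactSpace X]
    [T2Space X] [MeasurableSpace X] [OpensMeasurableSpace X]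
    (μ : Measure X) [IsFiniteMeasure μ] (Q : X × X → ℂ) (hQc : Continuous Q)
    (hpsd : ∀ (n : ℕ) (y : Fin n → X) (d : Fin n → ℝ),
      0 ≤ ∑ k, ∑ l, ((d k : ℂ)) * ((d l : ℂ)) * Q (y k, y l)) :
    0 ≤ ∫ a, ∫ b, Q (a, b) ∂μ ∂μ := by
  classical
  rcases isEmpty_or_nonempty X with hX | hX
  · simp [integral_of_isEmpty]
  obtain ⟨x₀⟩ := hX
  letI : UniformSpace X := uniformSpaceOfCompactR1
  apply nonneg_of_forall_close
  intro ε hε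
  set T : ℝ := (μ univ).toReal with hTdef
  have hT0 : 0 ≤ T := ENNReal.toReal_nonneg
  set δ : ℝ := ε / (T * T + 1) with hδdef
  have hδ : 0 < δ := by positivity
  -- uniform continuity
  have hQuc : UniformContinuous Q := CompactSpace.uniformContinuous_of_continuous hQc
  have hs : {z : ℂ × ℂ | dist z.1 z.2 < δ} ∈ 𝓤 ℂ := Metric.dist_mem_uniformity hδ
  have hQW := hQuc hs
  rw [uniformity_prod_eq_prod, mem_map] at hQW
  rcases mem_prod_iff.mp hQW with ⟨u, hu, v, hv, huv⟩
  have key : ∀ a a' b b' : X, (a, a') ∈ u → (b, b') ∈ v →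
      dist (Q (a, b)) (Q (a', b')) < δ := by
    intro a a' b b' ha hb
    have h2 := huv (Set.mk_mem_prod ha hb)
    simp only [Set.mem_preimage, Set.mem_setOf_eq] at h2
    exact h2
  -- open sub-entourage
  have huu : u ∩ v ∈ 𝓤 X := inter_mem hu hv
  rcases (uniformity_hasBasis_open.mem_iff.mp huu) with ⟨V₀, ⟨hV₀mem, hV₀open⟩, hV₀sub⟩
  -- finite cover
  have hcov : (univ : Set X) ⊆ ⋃ x : X, UniformSpace.ball x V₀ := fun y _ =>
    mem_iUnion.mpr ⟨y, UniformSpace.mem_ball_self y hV₀mem⟩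
  obtain ⟨t, ht⟩ := isCompact_univ.elim_finite_subcover (fun x : X => UniformSpace.ball x V₀)
    (fun x => UniformSpace.isOpen_ball x hV₀open) hcov
  set n : ℕ := t.card with hn
  set p : ℕ → X := fun k => if h : k < n then ((t.equivFin.symm ⟨k, h⟩ : {x // x ∈ t}) : X) else x₀
    with hp
  have hcov' : ∀ y : X, ∃ k, k < n ∧ y ∈ UniformSpace.ball (p k) V₀ := by
    intro y
    have := ht (mem_univ y)
    rcases mem_iUnion₂.mp this with ⟨i, hi, hyi⟩
    refine ⟨(t.equivFin ⟨i, hi⟩ : Fin n).1, (t.equivFin ⟨i, hi⟩).2, ?_⟩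
    have hpk : p ((t.equivFin ⟨i, hi⟩ : Fin n).1) = i := by
      rw [hp]
      simp only [(t.equivFin ⟨i, hi⟩).2, dif_pos]
      rw [dif_pos (t.equivFin ⟨i, hi⟩).2]; simp
    rwa [hpk]
  set B : ℕ → Set X := fun k => if k < n then UniformSpace.ball (p k) V₀ else ∅ with hB
  have hBopen : ∀ k, IsOpen (B k) := by
    intro k
    rw [hB]
    by_cases h : k < n
    · simpa [h] using UniformSpace.isOpen_ball (p k) hV₀open
    · simp [h]
  set E : ℕ → Set X := disjointed B with hE
  have hEmeas : ∀ k, MeasurableSet (E k) :=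
    MeasurableSet.disjointed fun k => (hBopen k).measurableSet
  have hEdis : Pairwise (Function.onFun Disjoint E) := disjoint_disjointed B
  have hEsub : ∀ k, E k ⊆ B k := fun k => disjointed_subset B k
  have hEunion : ⋃ k, E k = univ := by
    rw [hE, iUnion_disjointed]
    apply eq_univ_of_forall
    intro y
    rcases hcov' y with ⟨k, hk, hyk⟩
    exact mem_iUnion.mpr ⟨k, by simp [hB, hk, hyk]⟩
  have hEuniv : ⋃ k ∈ Finset.range n, E k = univ := by
    apply Subset.antisymm (subset_univ _)
    rw [← hEunion]
    rintro y hy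
    rcases mem_iUnion.mp hy with ⟨k, hk⟩
    have hkn : k < n := by
      by_contra hge
      have : E k ⊆ (∅ : Set X) := by
        refine (hEsub k).trans ?_
        rw [hB]; simp [not_lt.mp hge]
      exact this hk
    exact mem_biUnion (Finset.mem_range.mpr hkn) hk
  -- splitting
  have split : ∀ φ : X → ℂ, Continuous φ →
      ∫ x, φ x ∂μ = ∑ k ∈ Finset.range n, ∫ x in E k, φ x ∂μ := by
    intro φ hφ
    rw [← setIntegral_univ, ← hEuniv, integral_biUnion_finset]
    · exact fun k _ => hEmeas k
    · exact fun i _ j _ hij => hEdis hij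
    · exact fun k _ => (continuous_integrable_aux μ hφ).integrableOn
  -- basic integrability and continuity
  have hQa : ∀ a : X, Continuous fun b => Q (a, b) :=
    fun a => hQc.comp (Continuous.prodMk_right a)
  have hψcont : ∀ s : Set X, Continuous fun a => ∫ b in s, Q (a, b) ∂μ :=
    fun s => continuous_parametric_integral (μ.restrict s) hQc
  -- measures
  set m : ℕ → ℝ := fun k => (μ (E k)).toReal with hm
  have hm0 : ∀ k, 0 ≤ m k := fun k => ENNReal.toReal_nonneg
  set S : ℂ := ∑ k ∈ Finset.range n, ∑ l ∈ Finset.range n, ((m k : ℂ)) * ((m l : ℂ)) * Q (p k, p l)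
    with hSdef
  have hS : 0 ≤ S := by
    calc (0:ℂ) ≤ ∑ k : Fin n, ∑ l : Fin n, ((m k.1 : ℂ)) * ((m l.1 : ℂ)) * Q (p k.1, p l.1) :=
          hpsd n (fun k => p k.1) (fun k => m k.1)
      _ = S := by
          rw [hSdef, Finset.sum_range
            (fun k => ∑ l ∈ Finset.range n, ((m k : ℂ)) * ((m l : ℂ)) * Q (p k, p l))]
          exact Finset.sum_congr rfl fun k _ =>
            (Finset.sum_range (fun l => ((m k.1 : ℂ)) * ((m l : ℂ)) * Q (p k.1, p l))).symm
  -- identity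
  have hI : ∫ a, ∫ b, Q (a, b) ∂μ ∂μ
      = ∑ k ∈ Finset.range n, ∑ l ∈ Finset.range n, ∫ a in E k, ∫ b in E l, Q (a, b) ∂μ ∂μ := by
    rw [split _ (continuous_parametric_integral μ hQc)]
    refine Finset.sum_congr rfl fun k _ => ?_
    have h1 : ∀ a : X, ∫ b, Q (a, b) ∂μ = ∑ l ∈ Finset.range n, ∫ b in E l, Q (a, b) ∂μ :=
      fun a => split _ (hQa a)
    rw [integral_congr_ae (Eventually.of_forall h1)]
    exact integral_finset_sum _ fun l _ =>
      (continuous_integrable_aux (μ.restrict (E k)) (hψcont (E l)))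
  -- per-piece bounds
  have piece : ∀ k ∈ Finset.range n, ∀ l ∈ Finset.range n,
      ‖(∫ a in E k, ∫ b in E l, Q (a, b) ∂μ ∂μ) - ((m k : ℂ)) * ((m l : ℂ)) * Q (p k, p l)‖
        ≤ δ * (m k * m l) := by
    intro k hk l hl
    have hkn := Finset.mem_range.mp hk
    have hln := Finset.mem_range.mp hl
    have hmemk : ∀ a ∈ E k, (p k, a) ∈ V₀ := by
      intro a ha
      have : a ∈ B k := hEsub k ha
      rw [hB] at this
      simpa [hkn, UniformSpace.ball] using this
    have hmeml : ∀ b ∈ E l, (p l, b) ∈ V₀ := by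
      intro b hb
      have : b ∈ B l := hEsub l hb
      rw [hB] at this
      simpa [hln, UniformSpace.ball] using this
    have hQbd : ∀ a ∈ E k, ∀ b ∈ E l, ‖Q (a, b) - Q (p k, p l)‖ ≤ δ := by
      intro a ha b hb
      have h1 := key (p k) a (p l) b (hV₀sub (hmemk a ha)).1 (hV₀sub (hmeml b hb)).2
      rw [dist_comm] at h1
      rw [← dist_eq_norm]
      exact le_of_lt h1
    -- inner bound
    have hinner : ∀ a ∈ E k,
        ‖(∫ b in E l, Q (a, b) ∂μ) - ((m l : ℂ)) * Q (p k, p l)‖ ≤ δ * m l := by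
      intro a ha
      have hint1 : IntegrableOn (fun b => Q (a, b)) (E l) μ :=
        (continuous_integrable_aux μ (hQa a)).integrableOn
      have heq : ∫ b in E l, (Q (a, b) - Q (p k, p l)) ∂μ
          = (∫ b in E l, Q (a, b) ∂μ) - ((m l : ℂ)) * Q (p k, p l) := by
        rw [integral_sub hint1 (integrableOn_const (measure_ne_top μ _)),
          setIntegral_const, measureReal_def, hm]
        rw [Complex.real_smul]
      rw [← heq]
      have := norm_setIntegral_le_of_norm_le_const (μ := μ) (s := E l)
        (f := fun b => Q (a, b) - Q (p k, p l)) (C := δ) (measure_lt_top μ _)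
        (fun b hb => hQbd a ha b hb)
      exact this
    -- outer
    have hintψ : IntegrableOn (fun a => ∫ b in E l, Q (a, b) ∂μ) (E k) μ :=
      (continuous_integrable_aux μ (hψcont (E l))).integrableOn
    have heq2 : ∫ a in E k, ((∫ b in E l, Q (a, b) ∂μ) - ((m l : ℂ)) * Q (p k, p l)) ∂μ
        = (∫ a in E k, ∫ b in E l, Q (a, b) ∂μ ∂μ) - ((m k : ℂ)) * ((m l : ℂ)) * Q (p k, p l) := by
      rw [integral_sub hintψ (integrableOn_const (measure_ne_top μ _)),
        setIntegral_const, measureReal_def, hm]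
      rw [Complex.real_smul]
      ring_nf
    rw [← heq2]
    have := norm_setIntegral_le_of_norm_le_const (μ := μ) (s := E k)
      (f := fun a => (∫ b in E l, Q (a, b) ∂μ) - ((m l : ℂ)) * Q (p k, p l)) (C := δ * m l)
      (measure_lt_top μ _) hinner
    calc ‖∫ a in E k, ((∫ b in E l, Q (a, b) ∂μ) - ((m l : ℂ)) * Q (p k, p l)) ∂μ‖
        ≤ (δ * m l) * (μ (E k)).toReal := this
      _ = δ * (m k * m l) := by
          rw [show (μ (E k)).toReal = m k from rfl]; ring
  -- sum of measures
  have hmsum : ∑ k ∈ Finset.range n, m k = T := by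
    rw [hm, hTdef, ← hEuniv]
    rw [measure_biUnion_finset (fun i _ j _ hij => hEdis hij) (fun k _ => hEmeas k)]
    rw [ENNReal.toReal_sum (fun k _ => measure_ne_top μ _)]
  -- total estimate
  refine ⟨S, hS, ?_⟩
  have hIS : ‖(∫ a, ∫ b, Q (a, b) ∂μ ∂μ) - S‖ ≤ δ * (T * T) := by
    rw [hI, hSdef, ← Finset.sum_sub_distrib]
    calc ‖∑ k ∈ Finset.range n, (∑ l ∈ Finset.range n, (∫ a in E k, ∫ b in E l, Q (a, b) ∂μ ∂μ)
            - ∑ l ∈ Finset.range n, ((m k : ℂ)) * ((m l : ℂ)) * Q (p k, p l))‖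
        ≤ ∑ k ∈ Finset.range n, ∑ l ∈ Finset.range n, δ * (m k * m l) := by
          refine le_trans (norm_sum_le _ _) ?_
          refine Finset.sum_le_sum fun k hk => ?_
          rw [← Finset.sum_sub_distrib]
          exact le_trans (norm_sum_le _ _) (Finset.sum_le_sum fun l hl => piece k hk l hl)
      _ = ∑ k ∈ Finset.range n, (δ * m k) * ∑ l ∈ Finset.range n, m l := by
          refine Finset.sum_congr rfl fun k _ => ?_
          rw [Finset.mul_sum]
          exact Finset.sum_congr rfl fun l _ => by ring
      _ = δ * (T * T) := by
          rw [hmsum]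
          rw [← Finset.sum_mul, ← Finset.mul_sum, hmsum]
          ring
  refine le_trans hIS ?_
  have h2 : δ * (T * T + 1) = ε := div_mul_cancel₀ _ (by positivity)
  nlinarith [hδ.le]

set_option maxHeartbeats 1000000 in
lemma avg_bundle {G : Type} [Group G] [TopologicalSpace G] [IsTopologicalGroup G] [T2Space G]
    (H : Subgroup G) [MeasurableSpace ↥H] [BorelSpace ↥H] [CompactSpace ↥H]
    (μ : Measure ↥H) [IsProbabilityMeasure μ] [μ.IsMulLeftInvariant]
    (u : G → ℂ) (huc : Continuous u) (huPD : IsPDFun u) :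
    Continuous (fun g : G => ∫ a : ↥H, ∫ b : ↥H, u ((a : G)⁻¹ * g * (b : G)) ∂μ ∂μ)
      ∧ IsPDFun (fun g : G => ∫ a : ↥H, ∫ b : ↥H, u ((a : G)⁻¹ * g * (b : G)) ∂μ ∂μ)
      ∧ IsDosetInvariant H (fun g : G => ∫ a : ↥H, ∫ b : ↥H, u ((a : G)⁻¹ * g * (b : G)) ∂μ ∂μ) := by
  have hjoint : Continuous fun q : (G × ↥H) × ↥H => u (((q.1.2 : G))⁻¹ * q.1.1 * (q.2 : G)) := by
    apply huc.comp
    have h1 : Continuous fun q : (G × ↥H) × ↥H => ((q.1.2 : G))⁻¹ :=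
      (continuous_subtype_val.comp (continuous_snd.comp continuous_fst)).inv
    have h2 : Continuous fun q : (G × ↥H) × ↥H => q.1.1 := continuous_fst.comp continuous_fst
    have h3 : Continuous fun q : (G × ↥H) × ↥H => (q.2 : G) :=
      continuous_subtype_val.comp continuous_snd
    exact (h1.mul h2).mul h3
  have hθ : Continuous fun gh : G × ↥H => ∫ b : ↥H, u (((gh.2 : G))⁻¹ * gh.1 * (b : G)) ∂μ :=
    continuous_parametric_integral μ hjoint
  have hcont : Continuous fun g : G => ∫ a : ↥H, ∫ b : ↥H, u ((a : G)⁻¹ * g * (b : G)) ∂μ ∂μ :=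
    continuous_parametric_integral μ hθ
  refine ⟨hcont, ?_, ?_⟩
  · -- positive definiteness
    intro N g c
    set Q : ↥H × ↥H → ℂ := fun ab => ∑ i, ∑ j,
      (starRingEnd ℂ) (c i) * c j * u ((g i * (ab.1 : G))⁻¹ * (g j * (ab.2 : G))) with hQdef
    have hQc : Continuous Q := by
      apply continuous_finset_sum; intro i _
      apply continuous_finset_sum; intro j _
      refine continuous_const.mul (huc.comp ?_)
      have h1 : Continuous fun ab : ↥H × ↥H => (g i * (ab.1 : G))⁻¹ :=
        (continuous_const.mul (continuous_subtype_val.comp continuous_fst)).inv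
      have h2 : Continuous fun ab : ↥H × ↥H => g j * (ab.2 : G) :=
        continuous_const.mul (continuous_subtype_val.comp continuous_snd)
      exact h1.mul h2
    have hQpsd : ∀ (n : ℕ) (y : Fin n → ↥H) (d : Fin n → ℝ),
        0 ≤ ∑ k, ∑ l, ((d k : ℂ)) * ((d l : ℂ)) * Q (y k, y l) := by
      intro n y d
      calc (0:ℂ) ≤ ∑ p : Fin n × Fin N, ∑ q : Fin n × Fin N,
            (starRingEnd ℂ) (((d p.1 : ℂ)) * c p.2) * (((d q.1 : ℂ)) * c q.2)
              * u ((g p.2 * ((y p.1 : G)))⁻¹ * (g q.2 * ((y q.1 : G)))) :=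
            huPD.fintype (Fin n × Fin N) (fun p => g p.2 * ((y p.1 : G)))
              (fun p => ((d p.1 : ℂ)) * c p.2)
        _ = ∑ k, ∑ l, ((d k : ℂ)) * ((d l : ℂ)) * Q (y k, y l) := by
            rw [Fintype.sum_prod_type]
            refine Finset.sum_congr rfl fun k _ => ?_
            rw [Finset.sum_comm]
            rw [Fintype.sum_prod_type]
            refine Finset.sum_congr rfl fun l _ => ?_
            rw [Finset.sum_comm]
            simp only [hQdef, Finset.mul_sum, map_mul, Complex.conj_ofReal]
            refine Finset.sum_congr rfl fun i _ => ?_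
            refine Finset.sum_congr rfl fun j _ => ?_
            ring
    have hintb : ∀ (i j : Fin N) (a : ↥H),
        Integrable (fun b : ↥H => u ((g i * (a : G))⁻¹ * (g j * (b : G)))) μ := by
      intro i j a
      refine continuous_integrable_aux μ (huc.comp ?_)
      exact continuous_const.mul (continuous_const.mul continuous_subtype_val)
    have hinta : ∀ i j : Fin N,
        Continuous fun a : ↥H => ∫ b : ↥H, u ((g i * (a : G))⁻¹ * (g j * (b : G))) ∂μ := by
      intro i j
      have h1 : Continuous fun ab : ↥H × ↥H => (g i * (ab.1 : G))⁻¹ :=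
        (continuous_const.mul (continuous_subtype_val.comp continuous_fst)).inv
      have h2 : Continuous fun ab : ↥H × ↥H => u ((g i * (ab.1 : G))⁻¹ * (g j * (ab.2 : G))) :=
        huc.comp (h1.mul (continuous_const.mul (continuous_subtype_val.comp continuous_snd)))
      exact continuous_parametric_integral μ h2
    have step : ∑ i, ∑ j, (starRingEnd ℂ) (c i) * c j
          * (∫ a : ↥H, ∫ b : ↥H, u ((a : G)⁻¹ * ((g i)⁻¹ * g j) * (b : G)) ∂μ ∂μ)
        = ∫ a, ∫ b, Q (a, b) ∂μ ∂μ := by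
      have harg : ∀ (i j : Fin N) (a b : ↥H),
          (a : G)⁻¹ * ((g i)⁻¹ * g j) * (b : G) = (g i * (a : G))⁻¹ * (g j * (b : G)) := by
        intro i j a b; group
      have hQint : ∀ a : ↥H, ∫ b, Q (a, b) ∂μ = ∑ i, ∑ j, (starRingEnd ℂ) (c i) * c j
          * ∫ b : ↥H, u ((g i * (a : G))⁻¹ * (g j * (b : G))) ∂μ := by
        intro a
        calc ∫ b, Q (a, b) ∂μ
            = ∑ i, ∫ b : ↥H, (∑ j, (starRingEnd ℂ) (c i) * c j
                * u ((g i * (a : G))⁻¹ * (g j * (b : G)))) ∂μ := by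
              refine integral_finset_sum _ fun i _ => ?_
              exact integrable_finset_sum _ fun j _ => ((hintb i j a).const_mul _)
          _ = ∑ i, ∑ j, (starRingEnd ℂ) (c i) * c j
                * ∫ b : ↥H, u ((g i * (a : G))⁻¹ * (g j * (b : G))) ∂μ := by
              refine Finset.sum_congr rfl fun i _ => ?_
              rw [integral_finset_sum _ fun j _ => ((hintb i j a).const_mul _)]
              exact Finset.sum_congr rfl fun j _ => integral_const_mul _ _
      calc ∑ i, ∑ j, (starRingEnd ℂ) (c i) * c j
            * (∫ a : ↥H, ∫ b : ↥H, u ((a : G)⁻¹ * ((g i)⁻¹ * g j) * (b : G)) ∂μ ∂μ)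
          = ∑ i, ∑ j, (starRingEnd ℂ) (c i) * c j
            * (∫ a : ↥H, ∫ b : ↥H, u ((g i * (a : G))⁻¹ * (g j * (b : G))) ∂μ ∂μ) := by
            refine Finset.sum_congr rfl fun i _ => Finset.sum_congr rfl fun j _ => ?_
            congr 1
            refine integral_congr_ae (Eventually.of_forall fun a => ?_)
            refine integral_congr_ae (Eventually.of_forall fun b => ?_)
            show u ((a : G)⁻¹ * ((g i)⁻¹ * g j) * (b : G))
              = u ((g i * (a : G))⁻¹ * (g j * (b : G)))
            rw [harg]
        _ = ∫ a, ∫ b, Q (a, b) ∂μ ∂μ := by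
            rw [integral_congr_ae (Eventually.of_forall hQint)]
            rw [integral_finset_sum _ fun i _ => ?_]
            · refine Finset.sum_congr rfl fun i _ => ?_
              rw [integral_finset_sum _ fun j _ => ?_]
              · exact Finset.sum_congr rfl fun j _ => (integral_const_mul _ _).symm
              · exact (continuous_integrable_aux μ (hinta i j)).const_mul _
            · exact integrable_finset_sum _ fun j _ =>
                ((continuous_integrable_aux μ (hinta i j)).const_mul _)
    show 0 ≤ ∑ i, ∑ j, (starRingEnd ℂ) (c i) * c j
      * (∫ a : ↥H, ∫ b : ↥H, u ((a : G)⁻¹ * ((g i)⁻¹ * g j) * (b : G)) ∂μ ∂μ)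
    rw [step]
    exact integral_integral_nonneg_of_psd_kernel μ Q hQc hQpsd
  · -- double coset invariance
    intro g h₀ hh₀ h₀' hh₀'
    have step1 : ∀ a : ↥H, (∫ b : ↥H, u ((a : G)⁻¹ * (h₀ * g * h₀') * (b : G)) ∂μ)
        = ∫ b : ↥H, u (((a : G)⁻¹ * h₀) * g * (b : G)) ∂μ := by
      intro a
      have h2 := integral_mul_left_eq_self (μ := μ)
        (fun b : ↥H => u (((a : G)⁻¹ * h₀) * g * (b : G))) (⟨h₀', hh₀'⟩ : ↥H)
      rw [← h2]
      refine integral_congr_ae (Eventually.of_forall fun b => ?_)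
      show u ((a : G)⁻¹ * (h₀ * g * h₀') * (b : G))
        = u (((a : G)⁻¹ * h₀) * g * (((⟨h₀', hh₀'⟩ : ↥H) * b : ↥H) : G))
      have hcoe : (((⟨h₀', hh₀'⟩ : ↥H) * b : ↥H) : G) = h₀' * (b : G) := rfl
      rw [hcoe]
      congr 1
      group
    show (∫ a : ↥H, ∫ b : ↥H, u ((a : G)⁻¹ * (h₀ * g * h₀') * (b : G)) ∂μ ∂μ)
      = ∫ a : ↥H, ∫ b : ↥H, u ((a : G)⁻¹ * g * (b : G)) ∂μ ∂μ
    rw [integral_congr_ae (Eventually.of_forall step1)]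
    have h3 := integral_mul_left_eq_self (μ := μ)
      (fun a : ↥H => ∫ b : ↥H, u ((a : G)⁻¹ * g * (b : G)) ∂μ) (⟨h₀, hh₀⟩ : ↥H)⁻¹
    rw [← h3]
    refine integral_congr_ae (Eventually.of_forall fun a => ?_)
    refine integral_congr_ae (Eventually.of_forall fun b => ?_)
    show u (((a : G)⁻¹ * h₀) * g * (b : G))
      = u (((((⟨h₀, hh₀⟩ : ↥H)⁻¹ * a : ↥H) : G))⁻¹ * g * (b : G))
    have hcoe : ((((⟨h₀, hh₀⟩ : ↥H)⁻¹ * a : ↥H) : G))⁻¹ = (a : G)⁻¹ * h₀ := by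
      have : ((((⟨h₀, hh₀⟩ : ↥H)⁻¹ * a : ↥H) : G)) = h₀⁻¹ * (a : G) := rfl
      rw [this]
      group
    rw [hcoe]

set_option maxHeartbeats 1000000 in
/-- on a locally compact group `G` with compact subgroup `H`, a continuous
double-coset-invariant function with a continuous positive decomposition admits a
continuous positive decomposition into double-coset-invariant functions. -/
theorem doset_invariant_positive_decomposition_of_compact_subgroup
    {G : Type} [Group G] [TopologicalSpace G] [IsTopologicalGroup G]
    [LocallyCompactSpace G] [T2Space G]
    (H : Subgroup G) (hH : IsCompact (H : Set G))
    (f : G → ℂ) (hfc : Continuous f) (hfinv : IsDosetInvariant H f)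
    (fp fm : G → ℂ)
    (hfpc : Continuous fp) (hfpPD : IsPDFun fp)
    (hfmc : Continuous fm) (hfmPD : IsPDFun fm)
    (hdec : ∀ g, f g = fp g - fm g) :
    ∃ fp' fm' : G → ℂ,
      Continuous fp' ∧ IsPDFun fp' ∧ IsDosetInvariant H fp' ∧
      Continuous fm' ∧ IsPDFun fm' ∧ IsDosetInvariant H fm' ∧
      ∀ g, f g = fp' g - fm' g := by
  classical
  letI : MeasurableSpace ↥H := borel ↥H
  haveI : BorelSpace ↥H := ⟨rfl⟩
  haveI : CompactSpace ↥H := isCompact_iff_compactSpace.mp hH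
  haveI : Nonempty ↥H := ⟨1⟩
  set μ : Measure ↥H := Measure.haarMeasure ⊤ with hμ
  haveI : IsProbabilityMeasure μ := ⟨by
    rw [hμ, ← TopologicalSpace.PositiveCompacts.coe_top (α := ↥H)]
    exact Measure.haarMeasure_self⟩
  haveI : μ.IsMulLeftInvariant := Measure.isMulLeftInvariant_haarMeasure ⊤
  obtain ⟨hpc, hpPD, hpinv⟩ := avg_bundle H μ fp hfpc hfpPD
  obtain ⟨hmc, hmPD, hminv⟩ := avg_bundle H μ fm hfmc hfmPD
  refine ⟨fun g : G => ∫ a : ↥H, ∫ b : ↥H, fp ((a : G)⁻¹ * g * (b : G)) ∂μ ∂μ,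
    fun g : G => ∫ a : ↥H, ∫ b : ↥H, fm ((a : G)⁻¹ * g * (b : G)) ∂μ ∂μ,
    hpc, hpPD, hpinv, hmc, hmPD, hminv, ?_⟩
  intro g
  have hinner : ∀ (w : G → ℂ), Continuous w → ∀ a : ↥H,
      Integrable (fun b : ↥H => w ((a : G)⁻¹ * g * (b : G))) μ := by
    intro w hw a
    exact continuous_integrable_aux μ
      (hw.comp (continuous_const.mul continuous_subtype_val))
  have houter : ∀ (w : G → ℂ), Continuous w →
      Integrable (fun a : ↥H => ∫ b : ↥H, w ((a : G)⁻¹ * g * (b : G)) ∂μ) μ := by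
    intro w hw
    have h1 : Continuous fun ab : ↥H × ↥H => w ((ab.1 : G)⁻¹ * g * (ab.2 : G)) := by
      have ha : Continuous fun ab : ↥H × ↥H => ((ab.1 : G))⁻¹ :=
        (continuous_subtype_val.comp continuous_fst).inv
      exact hw.comp ((ha.mul continuous_const).mul
        (continuous_subtype_val.comp continuous_snd))
    exact continuous_integrable_aux μ (continuous_parametric_integral μ h1)
  have hcalc : (∫ a : ↥H, ∫ b : ↥H, fp ((a : G)⁻¹ * g * (b : G)) ∂μ ∂μ)
      - (∫ a : ↥H, ∫ b : ↥H, fm ((a : G)⁻¹ * g * (b : G)) ∂μ ∂μ) = f g := by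
    calc (∫ a : ↥H, ∫ b : ↥H, fp ((a : G)⁻¹ * g * (b : G)) ∂μ ∂μ)
          - (∫ a : ↥H, ∫ b : ↥H, fm ((a : G)⁻¹ * g * (b : G)) ∂μ ∂μ)
        = ∫ a : ↥H, ((∫ b : ↥H, fp ((a : G)⁻¹ * g * (b : G)) ∂μ)
            - (∫ b : ↥H, fm ((a : G)⁻¹ * g * (b : G)) ∂μ)) ∂μ :=
          (integral_sub (houter fp hfpc) (houter fm hfmc)).symm
      _ = ∫ a : ↥H, ∫ b : ↥H, (fp ((a : G)⁻¹ * g * (b : G))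
            - fm ((a : G)⁻¹ * g * (b : G))) ∂μ ∂μ := by
          refine integral_congr_ae (Eventually.of_forall fun a => ?_)
          exact (integral_sub (hinner fp hfpc a) (hinner fm hfmc a)).symm
      _ = ∫ a : ↥H, ∫ b : ↥H, f g ∂μ ∂μ := by
          refine integral_congr_ae (Eventually.of_forall fun a => ?_)
          refine integral_congr_ae (Eventually.of_forall fun b => ?_)
          show fp ((a : G)⁻¹ * g * (b : G)) - fm ((a : G)⁻¹ * g * (b : G)) = f g
          rw [← hdec]
          exact hfinv g ((a : G))⁻¹ (inv_mem a.2) (b : G) b.2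
      _ = f g := by
          simp [integral_const, measure_univ]
  exact hcalc.symm
end

section
/- Let G be a locally compact Hausdorff topological group. A function f : G → ℂ is a continuous positive definite function if and only if there exist a complex Hilbert space V, a strongly continuous unitary representation π : G → U(V), and a vector v ∈ V such that f(g) = ⟨π(g)v, v⟩ for all g ∈ G. -/
open scoped ComplexOrder InnerProductSpace

/- ### Auxiliary lemmas -/

theorem aux_inner_self_nonneg {V : Type} [NormedAddCommGroup V] [InnerProductSpace ℂ V] (x : V) :
    0 ≤ ⟪x, x⟫_ℂ := by
  rw [Complex.le_def]
  constructor
  · simpa using inner_self_nonneg (𝕜 := ℂ) (x := x)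
  · have := inner_self_im (𝕜 := ℂ) x
    rw [RCLike.im_to_complex] at this
    exact this.symm

theorem IsPDFun.one_nonneg {G : Type} [Group G] {f : G → ℂ} (h : IsPDFun f) : 0 ≤ f 1 := by
  have := h 1 (fun _ => 1) (fun _ => 1)
  simpa using this

theorem IsPDFun.conj_inv {G : Type} [Group G] {f : G → ℂ} (h : IsPDFun f) (a : G) :
    f a⁻¹ = (starRingEnd ℂ) (f a) := by
  have h1 := h 2 ![1, a] ![1, 1]
  have h2 := h 2 ![1, a] ![1, Complex.I]
  have hone := h.one_nonneg
  simp [Fin.sum_univ_two] at h1 h2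
  rw [Complex.le_def] at h1 h2 hone
  obtain ⟨-, i1⟩ := h1
  obtain ⟨-, i2⟩ := h2
  obtain ⟨-, ione⟩ := hone
  simp [Complex.add_im, Complex.add_re, Complex.mul_im, Complex.mul_re] at i1 i2 ione
  apply Complex.ext
  · simp only [Complex.conj_re]
    linarith
  · simp only [Complex.conj_im]
    linarith

/- ### The GNS pre-inner-product on finitely supported functions -/

/-- The GNS inner product on finitely supported functions. -/
noncomputable def gnsInner {G : Type} [Group G] (f : G → ℂ) (x y : G →₀ ℂ) : ℂ :=
  x.sum fun g a => y.sum fun h b => (starRingEnd ℂ) a * b * f (h⁻¹ * g)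

section gns

variable {G : Type} [Group G]

theorem gnsInner_single (f : G → ℂ) (u w : G) (a b : ℂ) :
    gnsInner f (Finsupp.single u a) (Finsupp.single w b)
      = (starRingEnd ℂ) a * b * f (w⁻¹ * u) := by
  unfold gnsInner
  rw [Finsupp.sum_single_index (by simp), Finsupp.sum_single_index (by simp)]

theorem gnsInner_add_left (f : G → ℂ) (x x' y : G →₀ ℂ) :
    gnsInner f (x + x') y = gnsInner f x y + gnsInner f x' y := by
  unfold gnsInner
  rw [Finsupp.sum_add_index' (by simp) ?_]
  intro g a a'
  rw [← Finsupp.sum_add]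
  congr 1; ext h b
  rw [map_add]; ring

theorem gnsInner_smul_left (f : G → ℂ) (r : ℂ) (x y : G →₀ ℂ) :
    gnsInner f (r • x) y = (starRingEnd ℂ) r * gnsInner f x y := by
  unfold gnsInner
  rw [Finsupp.sum_smul_index' (by simp)]
  rw [Finsupp.mul_sum]
  congr 1; ext g a
  rw [Finsupp.mul_sum]
  congr 1; ext h b
  simp only [smul_eq_mul, map_mul]; ring

theorem gnsInner_conj_symm (f : G → ℂ) (hconj : ∀ a : G, f a⁻¹ = (starRingEnd ℂ) (f a))
    (x y : G →₀ ℂ) : (starRingEnd ℂ) (gnsInner f y x) = gnsInner f x y := by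
  unfold gnsInner Finsupp.sum
  simp only [map_sum, map_mul]
  rw [Finset.sum_comm]
  refine Finset.sum_congr rfl fun g _ => ?_
  refine Finset.sum_congr rfl fun h _ => ?_
  rw [← hconj]
  simp only [mul_inv_rev, inv_inv, RingHomCompTriple.comp_apply, RingHom.id_apply,
    starRingEnd_self_apply]
  ring

theorem gnsInner_self_nonneg (f : G → ℂ) (hpd : IsPDFun f)
    (hconj : ∀ a : G, f a⁻¹ = (starRingEnd ℂ) (f a)) (x : G →₀ ℂ) :
    0 ≤ gnsInner f x x := by
  classical
  set s := x.support with hs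
  set N := s.card with hN
  set e : Fin N ≃ s := s.equivFin.symm with he
  have hS := hpd N (fun i => ((e i : s) : G)) (fun i => (starRingEnd ℂ) (x (e i)))
  set S := ∑ i, ∑ j, (starRingEnd ℂ) ((starRingEnd ℂ) (x (e i))) * (starRingEnd ℂ) (x (e j)) *
      f ((((e i : s) : G))⁻¹ * ((e j : s) : G)) with hSdef
  have him : S.im = 0 := by
    have := (Complex.le_def.1 hS).2
    simpa using this.symm
  have hconjS : (starRingEnd ℂ) S = S := Complex.conj_eq_iff_im.mpr him
  have key : gnsInner f x x = (starRingEnd ℂ) S := by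
    rw [hSdef]
    simp only [map_sum, map_mul, RingHomCompTriple.comp_apply, RingHom.id_apply,
      starRingEnd_self_apply]
    unfold gnsInner Finsupp.sum
    rw [← hs]
    rw [← Finset.sum_coe_sort s, ← Equiv.sum_comp e]
    refine Finset.sum_congr rfl fun i _ => ?_
    dsimp only
    rw [← Finset.sum_coe_sort s, ← Equiv.sum_comp e]
    refine Finset.sum_congr rfl fun j _ => ?_
    rw [← hconj]
    simp only [mul_inv_rev, inv_inv]
  rw [key, hconjS]
  exact hS

theorem gnsInner_mapDomain (f : G → ℂ) (g : G) (x y : G →₀ ℂ) :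
    gnsInner f (Finsupp.mapDomain (fun a => g * a) x) (Finsupp.mapDomain (fun a => g * a) y)
      = gnsInner f x y := by
  unfold gnsInner
  rw [Finsupp.sum_mapDomain_index (by simp) ?hadd]
  case hadd =>
    intro u a a'
    rw [← Finsupp.sum_add]
    congr 1; ext h b
    rw [map_add]; ring
  refine Finset.sum_congr rfl fun u _ => ?_
  dsimp only
  rw [Finsupp.sum_mapDomain_index (by simp) ?hadd2]
  case hadd2 =>
    intro w b b'
    ring
  refine Finset.sum_congr rfl fun w _ => ?_
  simp [mul_assoc, mul_inv_rev]

/-- The GNS pre-inner-product space structure. -/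
noncomputable def gnsCore (f : G → ℂ) (hpd : IsPDFun f)
    (hconj : ∀ a : G, f a⁻¹ = (starRingEnd ℂ) (f a)) :
    PreInnerProductSpace.Core ℂ (G →₀ ℂ) where
  inner := gnsInner f
  conj_inner_symm := gnsInner_conj_symm f hconj
  re_inner_nonneg x := by
    have := gnsInner_self_nonneg f hpd hconj x
    simpa using (Complex.le_def.1 this).1
  add_left := gnsInner_add_left f
  smul_left x y r := gnsInner_smul_left f r x y

end gns

/- ### Completion of linear isometry equivalences -/

open UniformSpace UniformSpace.Completion

section CompletionLift
variable {E : Type} [SeminormedAddCommGroup E] [NormedSpace ℂ E]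

/-- Lift a linear isometry equivalence to the completion. -/
noncomputable def LinearIsometryEquiv.completionLift (e : E ≃ₗᵢ[ℂ] E) :
    Completion E ≃ₗᵢ[ℂ] Completion E where
  toFun := Completion.map e
  invFun := Completion.map e.symm
  left_inv x := by
    have h : (Completion.map e.symm ∘ Completion.map e) x = Completion.map (⇑e.symm ∘ ⇑e) x := by
      rw [Completion.map_comp e.symm.isometry.uniformContinuous e.isometry.uniformContinuous]
    have h2 : (⇑e.symm ∘ ⇑e) = id := by funext a; simp
    simpa [h2, Completion.map_id] using h
  right_inv x := by
    have h : (Completion.map e ∘ Completion.map e.symm) x = Completion.map (⇑e ∘ ⇑e.symm) x := by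
      rw [Completion.map_comp e.isometry.uniformContinuous e.symm.isometry.uniformContinuous]
    have h2 : (⇑e ∘ ⇑e.symm) = id := by funext a; simp
    simpa [h2, Completion.map_id] using h
  map_add' x y := by
    refine Completion.induction_on₂ x y ?_ ?_
    · exact isClosed_eq (Completion.continuous_map.comp continuous_add)
        (Continuous.add (f := fun x : Completion E × Completion E => Completion.map e x.1)
          (g := fun x => Completion.map e x.2)
          ((Completion.continuous_map.comp continuous_fst))
          ((Completion.continuous_map.comp continuous_snd)))
    · intro a b
      rw [← Completion.coe_add, Completion.map_coe e.isometry.uniformContinuous,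
        Completion.map_coe e.isometry.uniformContinuous,
        Completion.map_coe e.isometry.uniformContinuous, map_add, Completion.coe_add]
  map_smul' c x := by
    refine Completion.induction_on x ?_ ?_
    · exact isClosed_eq (Completion.continuous_map.comp (continuous_const_smul c))
        ((continuous_const_smul c).comp Completion.continuous_map)
    · intro a
      rw [← Completion.coe_smul, Completion.map_coe e.isometry.uniformContinuous,
        Completion.map_coe e.isometry.uniformContinuous, map_smul]
      simp
  norm_map' x := by
    refine Completion.induction_on x ?_ ?_
    · exact isClosed_eq (continuous_norm.comp Completion.continuous_map) continuous_norm
    · intro a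
      show ‖Completion.map ⇑e ↑a‖ = ‖(↑a : Completion E)‖
      rw [Completion.map_coe e.isometry.uniformContinuous, Completion.norm_coe,
        Completion.norm_coe, e.norm_map]

theorem LinearIsometryEquiv.completionLift_coe (e : E ≃ₗᵢ[ℂ] E) (x : E) :
    e.completionLift (x : Completion E) = ↑(e x) :=
  Completion.map_coe e.isometry.uniformContinuous x

theorem LinearIsometryEquiv.completionLift_mul (e₁ e₂ : E ≃ₗᵢ[ℂ] E) :
    (e₁ * e₂).completionLift = e₁.completionLift * e₂.completionLift := by
  ext x
  refine Completion.induction_on x ?_ ?_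
  · exact isClosed_eq Completion.continuous_map
      (Completion.continuous_map.comp Completion.continuous_map)
  · intro a
    show (e₁ * e₂).completionLift ↑a = e₁.completionLift (e₂.completionLift ↑a)
    rw [LinearIsometryEquiv.completionLift_coe, LinearIsometryEquiv.completionLift_coe,
      LinearIsometryEquiv.completionLift_coe]
    rfl

theorem LinearIsometryEquiv.completionLift_one :
    (1 : E ≃ₗᵢ[ℂ] E).completionLift = 1 := by
  ext x
  refine Completion.induction_on x ?_ ?_
  · exact isClosed_eq Completion.continuous_map continuous_id
  · intro a
    show (1 : E ≃ₗᵢ[ℂ] E).completionLift ↑a = ↑a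
    rw [LinearIsometryEquiv.completionLift_coe]
    rfl

/-- Lift a unitary representation to the completion. -/
noncomputable def MonoidHom.completionLift {G : Type} [Group G] (ρ : G →* (E ≃ₗᵢ[ℂ] E)) :
    G →* (Completion E ≃ₗᵢ[ℂ] Completion E) where
  toFun g := (ρ g).completionLift
  map_one' := by
    show (ρ 1).completionLift = 1
    rw [map_one, LinearIsometryEquiv.completionLift_one]
  map_mul' g h := by
    show (ρ (g * h)).completionLift = _
    rw [map_mul, LinearIsometryEquiv.completionLift_mul]

end CompletionLift

/- ### Extending continuity of orbit maps by density -/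

theorem continuous_orbit_of_dense {α V : Type*} [TopologicalSpace α] [NormedAddCommGroup V]
    [NormedSpace ℂ V] (T : α → (V ≃ₗᵢ[ℂ] V)) {s : Set V} (hs : Dense s)
    (h : ∀ x ∈ s, Continuous fun a => T a x) (w : V) : Continuous fun a => T a w := by
  rw [continuous_iff_continuousAt]
  intro b
  rw [ContinuousAt, Metric.tendsto_nhds]
  intro ε hε
  obtain ⟨x, hxball, hxs⟩ := Metric.dense_iff.1 hs w (ε / 3) (by linarith)
  have hcx : ∀ᶠ a in nhds b, dist (T a x) (T b x) < ε / 3 := by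
    have h' := (h x hxs).continuousAt (x := b)
    rw [ContinuousAt, Metric.tendsto_nhds] at h'
    exact h' (ε / 3) (by linarith)
  filter_upwards [hcx] with a h3
  have e1 : dist (T a w) (T a x) = dist w x := (T a).dist_map w x
  have e2 : dist (T b x) (T b w) = dist x w := (T b).dist_map x w
  have htri : dist (T a w) (T b w)
      ≤ dist (T a w) (T a x) + dist (T a x) (T b x) + dist (T b x) (T b w) :=
    dist_triangle4 _ _ _ _
  have hwx : dist w x < ε / 3 := by
    have := Metric.mem_ball.1 hxball
    rwa [dist_comm] at this
  rw [e1, e2] at htri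
  rw [dist_comm x w] at htri
  linarith

/-- a function on a locally compact group is continuous and positive
definite iff it is a diagonal matrix coefficient `g ↦ ⟪π(g)v, v⟫` of a strongly
continuous unitary representation. -/
theorem continuous_pd_iff_diagonal_matrix_coefficient
    {G : Type} [Group G] [TopologicalSpace G] [IsTopologicalGroup G]
    [LocallyCompactSpace G] [T2Space G] (f : G → ℂ) :
    (Continuous f ∧ IsPDFun f) ↔
    ∃ (V : Type) (_ : NormedAddCommGroup V) (_ : InnerProductSpace ℂ V)
      (_ : CompleteSpace V) (π : G →* (V ≃ₗᵢ[ℂ] V)) (v : V),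
      (∀ w : V, Continuous fun g => π g w) ∧
      ∀ g : G, f g = ⟪π g v, v⟫_ℂ := by
  constructor
  · rintro ⟨hc, hpd⟩
    have hconj := hpd.conj_inv
    letI core : PreInnerProductSpace.Core ℂ (G →₀ ℂ) := gnsCore f hpd hconj
    letI : SeminormedAddCommGroup (G →₀ ℂ) := InnerProductSpace.Core.toSeminormedAddCommGroup (𝕜 := ℂ) (F := G →₀ ℂ)
    letI : NormedSpace ℂ (G →₀ ℂ) := InnerProductSpace.Core.toNormedSpace (𝕜 := ℂ) (F := G →₀ ℂ)
    letI : InnerProductSpace ℂ (G →₀ ℂ) :=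
      { toNormedSpace := inferInstance
        toInner := core.toInner
        norm_sq_eq_re_inner := fun x => by
          have h₁ : ‖x‖ ^ 2 = Real.sqrt (RCLike.re (core.inner x x)) ^ 2 := rfl
          have h₂ : 0 ≤ RCLike.re (core.inner x x) := core.re_inner_nonneg x
          rw [h₁, Real.sq_sqrt h₂]
        conj_inner_symm := core.conj_inner_symm
        add_left := core.add_left
        smul_left := core.smul_left }
    have hinner : ∀ x y : G →₀ ℂ, ⟪x, y⟫_ℂ = gnsInner f x y := fun _ _ => rfl
    -- the translation representation on finitely supported functions
    have hnorm : ∀ (g : G) (x : G →₀ ℂ),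
        ‖(Finsupp.domLCongr (Equiv.mulLeft g) : (G →₀ ℂ) ≃ₗ[ℂ] (G →₀ ℂ)) x‖ = ‖x‖ := by
      intro g x
      have hd : ∀ z : G →₀ ℂ,
          (Finsupp.domLCongr (Equiv.mulLeft g) : (G →₀ ℂ) ≃ₗ[ℂ] (G →₀ ℂ)) z
            = Finsupp.mapDomain (fun a => g * a) z := by
        intro z
        rw [Finsupp.domLCongr_apply]
        rw [Finsupp.domCongr_apply, Finsupp.equivMapDomain_eq_mapDomain]
        rfl
      have : ∀ z : G →₀ ℂ, ‖z‖ = Real.sqrt (RCLike.re (gnsInner f z z)) := fun _ => rfl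
      rw [this, this, hd, gnsInner_mapDomain]
    let T : G → ((G →₀ ℂ) ≃ₗᵢ[ℂ] (G →₀ ℂ)) := fun g =>
      ⟨Finsupp.domLCongr (Equiv.mulLeft g), hnorm g⟩
    have hT : ∀ (g : G) (x : G →₀ ℂ), T g x = Finsupp.mapDomain (fun a => g * a) x := by
      intro g x
      show (Finsupp.domLCongr (Equiv.mulLeft g) : (G →₀ ℂ) ≃ₗ[ℂ] (G →₀ ℂ)) x = _
      rw [Finsupp.domLCongr_apply, Finsupp.domCongr_apply, Finsupp.equivMapDomain_eq_mapDomain]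
      rfl
    let ρ : G →* ((G →₀ ℂ) ≃ₗᵢ[ℂ] (G →₀ ℂ)) :=
      { toFun := T
        map_one' := by
          ext x a
          show (Finsupp.domLCongr (Equiv.mulLeft 1) : (G →₀ ℂ) ≃ₗ[ℂ] (G →₀ ℂ)) x a = x a
          simp
          rfl
        map_mul' := fun g h => by
          ext x a
          show (Finsupp.domLCongr (Equiv.mulLeft (g * h)) : (G →₀ ℂ) ≃ₗ[ℂ] (G →₀ ℂ)) x a
            = (T g) ((T h) x) a
          show _ = (Finsupp.domLCongr (Equiv.mulLeft g) : (G →₀ ℂ) ≃ₗ[ℂ] (G →₀ ℂ))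
            ((Finsupp.domLCongr (Equiv.mulLeft h) : (G →₀ ℂ) ≃ₗ[ℂ] (G →₀ ℂ)) x) a
          simp [mul_assoc, Equiv.Perm.mul_def, Equiv.symm_trans_apply] }
    -- the lifted representation on the completion
    refine ⟨Completion (G →₀ ℂ), inferInstance, inferInstance, inferInstance,
      MonoidHom.completionLift ρ, ↑(Finsupp.single (1 : G) (1 : ℂ)), ?_, ?_⟩
    · -- strong continuity
      -- continuity of `g ↦ δ_g` into the completion
      have hφ : Continuous fun g : G =>
          ((Finsupp.single g (1 : ℂ) : G →₀ ℂ) : Completion (G →₀ ℂ)) := by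
        rw [continuous_iff_continuousAt]
        intro c
        rw [ContinuousAt, tendsto_iff_dist_tendsto_zero]
        have hdist : ∀ b : G,
            dist ((Finsupp.single b (1 : ℂ) : G →₀ ℂ) : Completion (G →₀ ℂ))
              ((Finsupp.single c (1 : ℂ) : G →₀ ℂ) : Completion (G →₀ ℂ))
            = Real.sqrt (RCLike.re
                (f 1 - f (c⁻¹ * b) - f (b⁻¹ * c) + f 1)) := by
          intro b
          rw [dist_eq_norm, ← Completion.coe_sub, Completion.norm_coe]
          rw [norm_eq_sqrt_re_inner (𝕜 := ℂ)]
          congr 2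
          rw [inner_sub_sub_self]
          rw [hinner, hinner, hinner, hinner]
          rw [gnsInner_single, gnsInner_single, gnsInner_single, gnsInner_single]
          simp
        simp only [hdist]
        have hcont : Continuous fun b : G =>
            RCLike.re (f 1 - f (c⁻¹ * b) - f (b⁻¹ * c) + f 1) := by
          apply RCLike.continuous_re.comp
          apply Continuous.add
          apply Continuous.sub
          apply Continuous.sub continuous_const
          · exact hc.comp (continuous_const.mul continuous_id)
          · exact hc.comp (continuous_inv.mul continuous_const)
          · exact continuous_const
        have h0 : RCLike.re (f 1 - f (c⁻¹ * c) - f (c⁻¹ * c) + f 1) = 0 := by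
          simp
        have := (Real.continuous_sqrt.comp hcont).tendsto c
        simpa [h0, Function.comp_def] using this
      -- continuity on the dense image of finitely supported functions
      have hA : ∀ x : G →₀ ℂ, Continuous fun g : G =>
          (MonoidHom.completionLift ρ) g (↑x : Completion (G →₀ ℂ)) := by
        intro x
        have hrep : ∀ g : G, (MonoidHom.completionLift ρ) g (↑x : Completion (G →₀ ℂ))
            = ∑ a ∈ x.support, x a •
              ((Finsupp.single (g * a) (1 : ℂ) : G →₀ ℂ) : Completion (G →₀ ℂ)) := by
          intro g
          show (ρ g).completionLift (↑x : Completion (G →₀ ℂ)) = _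
          rw [LinearIsometryEquiv.completionLift_coe]
          show ((T g x : G →₀ ℂ) : Completion (G →₀ ℂ)) = _
          rw [hT]
          rw [Finsupp.mapDomain]
          rw [Finsupp.sum]
          rw [show ((∑ a ∈ x.support, Finsupp.single (g * a) (x a) : G →₀ ℂ)
                : Completion (G →₀ ℂ))
              = ∑ a ∈ x.support,
                ((Finsupp.single (g * a) (x a) : G →₀ ℂ) : Completion (G →₀ ℂ)) from
            map_sum (Completion.toCompl (α := G →₀ ℂ)) _ _]
          refine Finset.sum_congr rfl fun a _ => ?_
          have hsingle : Finsupp.single (g * a) (x a) = x a • Finsupp.single (g * a) (1 : ℂ) := by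
            rw [Finsupp.smul_single']
            rw [mul_one]
          rw [hsingle]
          show ((x a • Finsupp.single (g * a) (1:ℂ) : G →₀ ℂ) : Completion (G →₀ ℂ)) = _
          rw [Completion.coe_smul]
        rw [show (fun g : G => (MonoidHom.completionLift ρ) g (↑x : Completion (G →₀ ℂ)))
            = fun g : G => ∑ a ∈ x.support, x a •
              ((Finsupp.single (g * a) (1 : ℂ) : G →₀ ℂ) : Completion (G →₀ ℂ)) from
          funext hrep]
        apply continuous_finset_sum
        intro a _
        exact ((hφ.comp (continuous_mul_right a))).const_smul (x a)
      intro w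
      refine continuous_orbit_of_dense (fun g => (MonoidHom.completionLift ρ) g)
        (s := Set.range ((↑·) : (G →₀ ℂ) → Completion (G →₀ ℂ)))
        Completion.denseRange_coe ?_ w
      rintro y ⟨x, rfl⟩
      exact hA x
    · -- the matrix coefficient
      intro g
      show f g = ⟪(ρ g).completionLift ↑(Finsupp.single (1 : G) (1 : ℂ)),
        (↑(Finsupp.single (1 : G) (1 : ℂ)) : Completion (G →₀ ℂ))⟫_ℂ
      rw [LinearIsometryEquiv.completionLift_coe]
      rw [Completion.inner_coe]
      rw [show (ρ g) (Finsupp.single (1 : G) (1 : ℂ))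
          = Finsupp.mapDomain (fun a => g * a) (Finsupp.single (1 : G) (1 : ℂ)) from hT g _,
        Finsupp.mapDomain_single, mul_one]
      rw [hinner, gnsInner_single]
      simp
  · rintro ⟨V, _, _, _, π, v, hcont, hf⟩
    have h1 : ∀ x y : G, f (x⁻¹ * y) = ⟪π y v, π x v⟫_ℂ := by
      intro x y
      rw [hf]
      have hxy : π x (π (x⁻¹ * y) v) = π y v := by
        have h := congrArg (fun e : V ≃ₗᵢ[ℂ] V => e v) (map_mul π x (x⁻¹ * y)).symm
        simp only [mul_inv_cancel_left] at h
        exact h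
      rw [← (π x).inner_map_map (π (x⁻¹ * y) v) v, hxy]
    constructor
    · have : Continuous fun g : G => ⟪π g v, v⟫_ℂ := (hcont v).inner continuous_const
      exact (funext hf : f = _) ▸ this
    · intro N g c
      set y : V := ∑ k, (starRingEnd ℂ) (c k) • (π (g k) v) with hy
      have key : ∑ i, ∑ j, (starRingEnd ℂ) (c i) * c j * f ((g i)⁻¹ * g j) = ⟪y, y⟫_ℂ := by
        rw [hy, sum_inner, Finset.sum_comm]
        refine Finset.sum_congr rfl fun i _ => ?_
        rw [inner_sum]
        refine Finset.sum_congr rfl fun j _ => ?_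
        rw [inner_smul_left, inner_smul_right, h1]
        simp only [RingHomCompTriple.comp_apply, RingHom.id_apply, starRingEnd_self_apply]
        ring
      rw [key]
      exact aux_inner_self_nonneg y
end

section
/- Let G be a locally compact Hausdorff topological group, H a closed subgroup, π : G → U(V) a strongly continuous unitary representation on a complex Hilbert space V, and v, w ∈ V. Let W = {u ∈ V : π(h)u = u for all h ∈ H} and let p : V → W be the orthogonal projection onto the closed subspace W. Define f : G → ℂ by f(g) = ⟨π(g)v, w⟩. Then f is invariant on double cosets, i.e. f(hgh') = f(g) for all g ∈ G and h, h' ∈ H, if and only if f(g) = ⟨π(g)p(v), p(w)⟩ for all g ∈ G. -/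
open scoped InnerProductSpace

section Aux

set_option linter.unusedSectionVars false

variable {G : Type} [Group G] {V : Type} [NormedAddCommGroup V]
  [InnerProductSpace ℂ V] [CompleteSpace V]

lemma pi_mul_apply (π : G →* (V ≃ₗᵢ[ℂ] V)) (a b : G) (y : V) :
    π (a * b) y = π a (π b y) := by
  rw [map_mul]; rfl

/-- Key lemma: if the matrix coefficient `h ↦ ⟪π h x, w⟫` is constant on `H`,
then `⟪p x, w⟫ = ⟪x, w⟫`, where `p` is the orthogonal projection onto the
subspace of `H`-fixed vectors. -/
lemma key_const_coeff (H : Subgroup G) (π : G →* (V ≃ₗᵢ[ℂ] V))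
    (W : Submodule ℂ V) (hW : ∀ u : V, u ∈ W ↔ ∀ h ∈ H, π h u = u)
    (p : V → V) (hp : ∀ u : V, p u ∈ W ∧ u - p u ∈ Wᗮ)
    (x w : V) (hc : ∀ h ∈ H, ⟪π h x, w⟫_ℂ = ⟪x, w⟫_ℂ) :
    ⟪p x, w⟫_ℂ = ⟪x, w⟫_ℂ := by
  classical
  set S : Set V := (fun h : G => π h x - x) '' (H : Set G) with hS
  set M : Submodule ℂ V := (Submodule.span ℂ S).topologicalClosure with hM
  have hMclosed : IsClosed (M : Set V) := Submodule.isClosed_topologicalClosure _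
  haveI : CompleteSpace M := hMclosed.completeSpace_coe
  have hgen : ∀ h ∈ H, π h x - x ∈ M := fun h hh =>
    Submodule.le_topologicalClosure _ (Submodule.subset_span ⟨h, hh, rfl⟩)
  -- M is invariant under π k for k ∈ H
  have hMinv : ∀ k ∈ H, ∀ y ∈ M, π k y ∈ M := by
    intro k hk
    have hle : M ≤ Submodule.comap ((π k).toLinearEquiv : V →ₗ[ℂ] V) M := by
      apply Submodule.topologicalClosure_minimal
      · rw [Submodule.span_le]
        rintro s ⟨h, hh, rfl⟩
        have heq : π k (π h x - x) = (π (k * h) x - x) - (π k x - x) := by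
          rw [pi_mul_apply, map_sub]; abel
        simp only [SetLike.mem_coe, Submodule.mem_comap]
        show π k (π h x - x) ∈ M
        rw [heq]
        exact Submodule.sub_mem _ (hgen _ (H.mul_mem hk hh)) (hgen _ hk)
      · have : (Submodule.comap ((π k).toLinearEquiv : V →ₗ[ℂ] V) M : Set V)
            = (π k) ⁻¹' (M : Set V) := rfl
        rw [this]
        exact hMclosed.preimage (π k).continuous
    intro y hy
    exact hle hy
  -- Mᗮ is invariant under π k for k ∈ H
  have hMorthinv : ∀ k ∈ H, ∀ y ∈ Mᗮ, π k y ∈ Mᗮ := by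
    intro k hk y hy
    rw [Submodule.mem_orthogonal]
    intro m hm
    have h1 : π k (π k⁻¹ m) = m := by
      rw [← pi_mul_apply, mul_inv_cancel, map_one]; rfl
    calc ⟪m, π k y⟫_ℂ = ⟪π k (π k⁻¹ m), π k y⟫_ℂ := by rw [h1]
      _ = ⟪π k⁻¹ m, y⟫_ℂ := (π k).inner_map_map _ _
      _ = 0 := hy _ (hMinv k⁻¹ (H.inv_mem hk) m hm)
  -- n := x - Q x is H-fixed
  set n : V := x - (M.orthogonalProjectionOnto x : V) with hn
  have hnorth : n ∈ Mᗮ := M.sub_starProjection_mem_orthogonal x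
  have hQmem : (M.orthogonalProjectionOnto x : V) ∈ M := SetLike.coe_mem _
  have hnfix : ∀ k ∈ H, π k n = n := by
    intro k hk
    have hmem1 : π k n - n ∈ M := by
      have heq : π k n - n = (π k x - x) - (π k (M.orthogonalProjectionOnto x : V)
          - (M.orthogonalProjectionOnto x : V)) := by
        rw [hn, map_sub]; abel
      rw [heq]
      exact Submodule.sub_mem _ (hgen k hk)
        (Submodule.sub_mem _ (hMinv k hk _ hQmem) hQmem)
    have hmem2 : π k n - n ∈ Mᗮ :=
      Submodule.sub_mem _ (hMorthinv k hk n hnorth) hnorth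
    have hz : ⟪π k n - n, π k n - n⟫_ℂ = 0 := hmem2 _ hmem1
    rw [inner_self_eq_zero] at hz
    exact sub_eq_zero.mp hz
  have hnW : n ∈ W := (hW n).mpr hnfix
  -- M ≤ Wᗮ
  have hMW : M ≤ Wᗮ := by
    apply Submodule.topologicalClosure_minimal
    · rw [Submodule.span_le]
      rintro s ⟨h, hh, rfl⟩
      simp only [SetLike.mem_coe, Submodule.mem_orthogonal]
      intro u hu
      have hfix : π h u = u := (hW u).mp hu h hh
      calc ⟪u, π h x - x⟫_ℂ = ⟪u, π h x⟫_ℂ - ⟪u, x⟫_ℂ := inner_sub_right _ _ _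
        _ = ⟪π h u, π h x⟫_ℂ - ⟪u, x⟫_ℂ := by rw [hfix]
        _ = 0 := by rw [(π h).inner_map_map]; ring
    · exact Submodule.isClosed_orthogonal W
  -- p x = n
  have hpx : p x = n := by
    have hxn : x - n ∈ M := by
      have : x - n = (M.orthogonalProjectionOnto x : V) := by rw [hn]; abel
      rw [this]; exact hQmem
    have h1 : p x - n ∈ W := Submodule.sub_mem _ (hp x).1 hnW
    have h2 : p x - n ∈ Wᗮ := by
      have heq : p x - n = (x - n) - (x - p x) := by abel
      rw [heq]
      exact Submodule.sub_mem _ (hMW hxn) (hp x).2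
    have hz : ⟪p x - n, p x - n⟫_ℂ = 0 := h2 _ h1
    rw [inner_self_eq_zero] at hz
    exact sub_eq_zero.mp hz
  -- M is orthogonal to w on the left
  have hMw : M ≤ (ℂ ∙ w)ᗮ := by
    apply Submodule.topologicalClosure_minimal
    · rw [Submodule.span_le]
      rintro s ⟨h, hh, rfl⟩
      simp only [SetLike.mem_coe, Submodule.mem_orthogonal_singleton_iff_inner_left]
      rw [inner_sub_left, hc h hh, sub_self]
    · exact Submodule.isClosed_orthogonal _
  -- conclude
  have hxpx : ⟪x - p x, w⟫_ℂ = 0 := by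
    have hmem : x - p x ∈ M := by
      rw [hpx]
      have : x - n = (M.orthogonalProjectionOnto x : V) := by rw [hn]; abel
      rw [this]; exact hQmem
    exact Submodule.mem_orthogonal_singleton_iff_inner_left.mp (hMw hmem)
  have : ⟪x, w⟫_ℂ - ⟪p x, w⟫_ℂ = 0 := by rw [← inner_sub_left]; exact hxpx
  exact (sub_eq_zero.mp this).symm

end Aux

/-- a matrix coefficient `f(g) = ⟪π(g)v, w⟫` of a strongly continuous
unitary representation is invariant on double cosets of `H` iff
`f(g) = ⟪π(g)p(v), p(w)⟫`, where `p` is the orthogonal projection onto the subspace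
`W = {u : π(h)u = u ∀ h ∈ H}` of `H`-fixed vectors. -/
theorem matrix_coefficient_doset_invariant_iff_projection
    {G : Type} [Group G] [TopologicalSpace G] [IsTopologicalGroup G]
    [LocallyCompactSpace G] [T2Space G]
    (H : Subgroup G) (hH : IsClosed (H : Set G))
    {V : Type} [NormedAddCommGroup V] [InnerProductSpace ℂ V] [CompleteSpace V]
    (π : G →* (V ≃ₗᵢ[ℂ] V)) (hπ : ∀ u : V, Continuous fun g => π g u)
    (W : Submodule ℂ V) (hW : ∀ u : V, u ∈ W ↔ ∀ h ∈ H, π h u = u)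
    (p : V → V) (hp : ∀ u : V, p u ∈ W ∧ u - p u ∈ Wᗮ)
    (v w : V) (f : G → ℂ) (hf : ∀ g : G, f g = ⟪π g v, w⟫_ℂ) :
    (∀ (g : G), ∀ h ∈ H, ∀ h' ∈ H, f (h * g * h') = f g) ↔
    ∀ g : G, f g = ⟪π g (p v), p w⟫_ℂ := by
  have hmul : ∀ (a b : G) (y : V), π (a * b) y = π a (π b y) := pi_mul_apply π
  have hfixW : ∀ u : V, u ∈ W → ∀ k ∈ H, π k u = u := fun u hu => (hW u).mp hu
  constructor
  · intro hinv
    -- Step 1: right invariance shows f g = ⟪π g (p v), w⟫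
    have h1 : ∀ g : G, ⟪π g (p v), w⟫_ℂ = f g := by
      intro g
      have hc : ∀ h' ∈ H, ⟪π h' v, (π g).symm w⟫_ℂ = ⟪v, (π g).symm w⟫_ℂ := by
        intro h' hh'
        have e1 : ⟪π h' v, (π g).symm w⟫_ℂ = ⟪π g (π h' v), w⟫_ℂ := by
          rw [← (π g).inner_map_map (π h' v) ((π g).symm w), (π g).apply_symm_apply]
        have e2 : ⟪v, (π g).symm w⟫_ℂ = ⟪π g v, w⟫_ℂ := by
          rw [← (π g).inner_map_map v ((π g).symm w), (π g).apply_symm_apply]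
        rw [e1, e2, ← hmul, ← hf, ← hf]
        simpa using hinv g 1 H.one_mem h' hh'
      have hkey := key_const_coeff H π W hW p hp v ((π g).symm w) hc
      calc ⟪π g (p v), w⟫_ℂ = ⟪p v, (π g).symm w⟫_ℂ := by
            rw [← (π g).inner_map_map (p v) ((π g).symm w), (π g).apply_symm_apply]
        _ = ⟪v, (π g).symm w⟫_ℂ := hkey
        _ = ⟪π g v, w⟫_ℂ := by
            rw [← (π g).inner_map_map v ((π g).symm w), (π g).apply_symm_apply]
        _ = f g := (hf g).symm
    intro g
    -- Step 2: left invariance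
    have hc2 : ∀ h ∈ H, ⟪π h (π g (p v)), w⟫_ℂ = ⟪π g (p v), w⟫_ℂ := by
      intro h hh
      rw [← hmul, h1 (h * g), h1 g]
      simpa using hinv g h hh 1 H.one_mem
    have h2 := key_const_coeff H π W hW p hp (π g (p v)) w hc2
    -- Step 3: move projections around
    set y := π g (p v) with hy
    have a1 : ⟪y - p y, p w⟫_ℂ = 0 :=
      Submodule.inner_left_of_mem_orthogonal (hp w).1 (hp y).2
    have a2 : ⟪p y, w - p w⟫_ℂ = 0 :=
      Submodule.inner_right_of_mem_orthogonal (hp y).1 (hp w).2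
    have b1 : ⟪y, p w⟫_ℂ = ⟪p y, p w⟫_ℂ := by
      have : ⟪y, p w⟫_ℂ - ⟪p y, p w⟫_ℂ = 0 := by rw [← inner_sub_left]; exact a1
      exact sub_eq_zero.mp this
    have b2 : ⟪p y, w⟫_ℂ = ⟪p y, p w⟫_ℂ := by
      have : ⟪p y, w⟫_ℂ - ⟪p y, p w⟫_ℂ = 0 := by rw [← inner_sub_right]; exact a2
      exact sub_eq_zero.mp this
    calc f g = ⟪y, w⟫_ℂ := (h1 g).symm
      _ = ⟪p y, w⟫_ℂ := h2.symm
      _ = ⟪p y, p w⟫_ℂ := b2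
      _ = ⟪y, p w⟫_ℂ := b1.symm
  · intro hform g h hh h' hh'
    have hpv := hfixW (p v) (hp v).1
    have hpw := hfixW (p w) (hp w).1
    rw [hform (h * g * h'), hform g, hmul, hmul, hpv h' hh']
    calc ⟪π h (π g (p v)), p w⟫_ℂ = ⟪π h (π g (p v)), π h (p w)⟫_ℂ := by
          rw [hpw h hh]
      _ = ⟪π g (p v), p w⟫_ℂ := (π h).inner_map_map _ _
end

section
/- Let S¹ = ℝ/ℤ be the circle with geodesic distance d(x,y) = |x − y| taken modulo 1 (i.e. the distance on the additive circle ℝ/ℤ). For any λ > 0, the Gaussian kernel k(x,y) = exp(−λ d(x,y)²) on S¹ admits a positive decomposition: there exist continuous positive definite kernels k₊, k₋ on S¹ with k = k₊ − k₋. -/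
open scoped ComplexOrder

noncomputable section
open Real Complex MeasureTheory Set intervalIntegral ComplexConjugate

namespace GKPD

instance : Fact ((0:ℝ) < 1) := ⟨one_pos⟩

variable (lam : ℝ)

def g0 (t : ℝ) : ℂ := (Real.exp (-lam * t^2) : ℝ)
def g1 (t : ℝ) : ℂ := ((-2*lam*t) * Real.exp (-lam * t^2) : ℝ)
def g2 (t : ℝ) : ℂ := ((-2*lam + (2*lam*t)^2) * Real.exp (-lam * t^2) : ℝ)
lemma h12 : (-(1:ℝ)/2) < 1/2 := by norm_num

lemma hasDerivAt_r0 (t : ℝ) :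
    HasDerivAt (fun t => Real.exp (-lam * t^2)) ((-2*lam*t) * Real.exp (-lam * t^2)) t := by
  have h : HasDerivAt (fun t : ℝ => -lam * t^2) (-lam * (2*t)) t := by
    simpa using (hasDerivAt_pow 2 t).const_mul (-lam)
  convert h.exp using 1; ring

lemma hasDerivAt_r1 (t : ℝ) :
    HasDerivAt (fun t => (-2*lam*t) * Real.exp (-lam * t^2))
      ((-2*lam + (2*lam*t)^2) * Real.exp (-lam * t^2)) t := by
  have h : HasDerivAt (fun t : ℝ => -2*lam*t) (-2*lam) t := by
    simpa using (hasDerivAt_id t).const_mul (-2*lam)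
  exact (h.fun_mul (hasDerivAt_r0 lam t)).congr_deriv (by ring)

lemma hasDerivAt_g0 (t : ℝ) : HasDerivAt (g0 lam) (g1 lam t) t :=
  (hasDerivAt_r0 lam t).ofReal_comp

lemma hasDerivAt_g1 (t : ℝ) : HasDerivAt (g1 lam) (g2 lam t) t :=
  (hasDerivAt_r1 lam t).ofReal_comp

lemma cont_g1 : Continuous (g1 lam) :=
  continuous_ofReal.comp (by continuity)

lemma cont_g2 : Continuous (g2 lam) :=
  continuous_ofReal.comp (by continuity)

lemma norm_inv_two_pi_I_n (n : ℤ) (hn : n ≠ 0) :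
    ‖(1 / (-2 * (π:ℂ) * I * (n:ℂ)))‖ ≤ |(n:ℝ)|⁻¹ := by
  rw [norm_div, norm_one]
  have h1 : ‖(-2 * (π:ℂ) * I * (n:ℂ))‖ = 2 * π * |(n:ℝ)| := by
    simp [norm_mul, abs_of_pos Real.pi_pos]
  rw [h1]
  have hn' : (0:ℝ) < |(n:ℝ)| := by
    simp [abs_pos, Int.cast_ne_zero, hn]
  rw [div_le_iff₀ (by positivity)]
  have h2 : (1:ℝ) ≤ |(n:ℝ)| := by
    rw [← Int.cast_abs]
    exact_mod_cast Int.one_le_abs hn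
  have h3 : |(n:ℝ)|⁻¹ * |(n:ℝ)| = 1 := inv_mul_cancel₀ hn'.ne'
  nlinarith [Real.pi_gt_three]

lemma bound_g2 (hlam : 0 < lam) (n : ℤ) :
    ‖fourierCoeffOn (h12) (g2 lam) n‖ ≤ 2*lam + lam^2 := by
  rw [fourierCoeffOn_eq_integral]
  have e1 : ((1:ℝ)/2 - -(1)/2) = 1 := by norm_num
  rw [e1]
  rw [one_div, inv_one, one_smul]
  have := intervalIntegral.norm_integral_le_of_norm_le_const (C := 2*lam + lam^2)
    (f := fun x => (fourier (-n)) ((x:ℝ) : AddCircle (1:ℝ)) • g2 lam x)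
    (a := -(1:ℝ)/2) (b := 1/2) ?_
  · calc _ ≤ (2*lam + lam^2) * |(1:ℝ)/2 - -(1)/2| := this
    _ = 2*lam + lam^2 := by norm_num
  · intro x hx
    rw [Set.uIoc_of_le (by norm_num : (-(1:ℝ)/2) ≤ 1/2)] at hx
    have hx2 : x^2 ≤ ((1:ℝ)/2)^2 := sq_le_sq' (by linarith [hx.1]) hx.2
    rw [norm_smul]
    have hf : ‖(fourier (-n)) ((x:ℝ) : AddCircle (1:ℝ))‖ = 1 := Circle.norm_coe _
    rw [hf, one_mul]
    unfold g2
    rw [Complex.norm_real]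
    have he : Real.exp (-lam * x^2) ≤ 1 := by
      rw [← Real.exp_zero]
      apply Real.exp_le_exp.mpr
      nlinarith
    have he0 : 0 < Real.exp (-lam * x^2) := Real.exp_pos _
    rw [Real.norm_eq_abs, abs_mul, abs_of_pos he0]
    have : |(-2*lam + (2*lam*x)^2)| ≤ 2*lam + lam^2 := by
      rw [abs_le]
      constructor <;> nlinarith
    nlinarith [abs_nonneg (-2*lam + (2*lam*x)^2)]


lemma decay (hlam : 0 < lam) (n : ℤ) (hn : n ≠ 0) :
    ‖fourierCoeffOn (h12) (g0 lam) n‖ ≤ (4*lam + lam^2) / (n:ℝ)^2 := by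
  have hn' : (0:ℝ) < |(n:ℝ)| := by simp [abs_pos, Int.cast_ne_zero, hn]
  have ibp1 := fourierCoeffOn_of_hasDerivAt (h12) hn
      (fun x _ => hasDerivAt_g0 lam x) ((cont_g1 lam).intervalIntegrable _ _)
  have ibp2 := fourierCoeffOn_of_hasDerivAt (h12) hn
      (fun x _ => hasDerivAt_g1 lam x) ((cont_g2 lam).intervalIntegrable _ _)
  have hg0 : g0 lam (1/2) - g0 lam (-(1)/2) = 0 := by
    unfold g0
    norm_num
  rw [hg0, mul_zero, zero_sub] at ibp1
  have ecast : ((1/2 : ℝ) : ℂ) - ((-1/2 : ℝ) : ℂ) = 1 := by norm_num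
  rw [ecast, one_mul] at ibp1 ibp2
  have hd1 : ‖fourierCoeffOn (h12) (g0 lam) n‖
      ≤ |(n:ℝ)|⁻¹ * ‖fourierCoeffOn (h12) (g1 lam) n‖ := by
    rw [ibp1, norm_mul, norm_neg]
    exact mul_le_mul_of_nonneg_right (norm_inv_two_pi_I_n n hn) (norm_nonneg _)
  have hg1diff : ‖g1 lam (1/2) - g1 lam (-(1)/2)‖ ≤ 2*lam := by
    unfold g1
    have e : (-(1:ℝ)/2)^2 = ((1:ℝ)/2)^2 := by norm_num
    rw [e, ← Complex.ofReal_sub, Complex.norm_real]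
    have e2 : (-2*lam*(1/2)) * Real.exp (-lam * (1/2)^2)
        - (-2*lam*(-(1)/2)) * Real.exp (-lam * (1/2)^2)
        = (-2*lam) * Real.exp (-lam * (1/2)^2) := by ring
    rw [e2]
    have he : Real.exp (-lam * (1/2)^2) ≤ 1 := by
      rw [← Real.exp_zero]
      apply Real.exp_le_exp.mpr
      nlinarith
    have he0 : 0 < Real.exp (-lam * (1/2)^2) := Real.exp_pos _
    rw [Real.norm_eq_abs, abs_mul, abs_of_pos he0]
    rw [abs_of_nonpos (by nlinarith : (-2*lam:ℝ) ≤ 0)]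
    nlinarith
  have hd2 : ‖fourierCoeffOn (h12) (g1 lam) n‖
      ≤ |(n:ℝ)|⁻¹ * (4*lam + lam^2) := by
    rw [ibp2, norm_mul]
    refine mul_le_mul (norm_inv_two_pi_I_n n hn) ?_ (norm_nonneg _) (by positivity)
    refine (norm_sub_le _ _).trans ?_
    rw [norm_mul]
    have hf : ‖(fourier (-n)) (((-(1:ℝ)/2) : ℝ) : AddCircle ((1:ℝ)/2 - -(1)/2))‖ = 1 :=
      Circle.norm_coe _
    rw [hf, one_mul]
    have := bound_g2 lam hlam n
    linarith [hg1diff]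
  calc ‖fourierCoeffOn (h12) (g0 lam) n‖
      ≤ |(n:ℝ)|⁻¹ * ‖fourierCoeffOn (h12) (g1 lam) n‖ := hd1
    _ ≤ |(n:ℝ)|⁻¹ * (|(n:ℝ)|⁻¹ * (4*lam + lam^2)) :=
        mul_le_mul_of_nonneg_left hd2 (by positivity)
    _ = (4*lam + lam^2) / (n:ℝ)^2 := by
        rw [← mul_assoc, ← mul_inv, abs_mul_abs_self]
        ring


def F (lam : ℝ) : AddCircle (1:ℝ) → ℂ := fun x => ((Real.exp (-lam * ‖x‖^2) : ℝ) : ℂ)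

lemma norm_coe {x : ℝ} (hx : x ∈ Set.uIcc (-(1:ℝ)/2) (1/2)) :
    ‖(x : AddCircle (1:ℝ))‖ = |x| := by
  rw [AddCircle.norm_coe_eq_abs_iff (1:ℝ) one_ne_zero]
  rw [Set.uIcc_of_le (by norm_num : (-(1:ℝ)/2) ≤ 1/2)] at hx
  rw [abs_one]
  rw [abs_le]
  constructor <;> [linarith [hx.1]; linarith [hx.2]]

lemma coeff_eq (lam : ℝ) (n : ℤ) :
    fourierCoeff (F lam) n = fourierCoeffOn (h12) (g0 lam) n := by
  rw [fourierCoeffOn_eq_integral, fourierCoeff_eq_intervalIntegral (F lam) n (-(1/2))]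
  have e1 : ((1:ℝ)/2 - -(1)/2) = 1 := by norm_num
  rw [e1]
  have e2 : ((-(1:ℝ)/2) + 1) = 1/2 := by norm_num
  have e3 : (-(1:ℝ)/2) = -(1/2) := by norm_num
  rw [← e3, e2]
  congr 1
  apply intervalIntegral.integral_congr
  intro x hx
  have : F lam ↑x = g0 lam x := by
    unfold F g0
    rw [norm_coe hx, _root_.sq_abs]
  simp only [this]

lemma conj_int (f : ℝ → ℂ) (a b : ℝ) :
    conj (∫ x in a..b, f x) = ∫ x in a..b, conj (f x) := by
  simp_rw [intervalIntegral, map_sub, integral_conj]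

lemma coeff_real (lam : ℝ) (n : ℤ) :
    conj (fourierCoeffOn (h12) (g0 lam) n) = fourierCoeffOn (h12) (g0 lam) n := by
  rw [fourierCoeffOn_eq_integral]
  have e1 : ((1:ℝ)/2 - -(1)/2) = 1 := by norm_num
  rw [e1]
  rw [real_smul, map_mul, conj_ofReal, conj_int]
  congr 1
  have key : ∀ x : ℝ, conj ((fourier (-n)) (↑x : AddCircle (1:ℝ)) • g0 lam x)
      = (fourier (-n)) ((-x : ℝ) : AddCircle (1:ℝ)) • g0 lam (-x) := by
    intro x
    rw [smul_eq_mul, smul_eq_mul, map_mul]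
    unfold g0
    rw [conj_ofReal, neg_sq]
    congr 1
    rw [← fourier_neg, fourier_apply, fourier_apply]
    congr 1
    simp [QuotientAddGroup.mk_neg]
    rfl
  simp_rw [key]
  have : (∫ x in (-(1:ℝ)/2)..(1/2),
      (fourier (-n)) ((-x : ℝ) : AddCircle (1:ℝ)) • g0 lam (-x))
      = ∫ x in (-((1:ℝ)/2))..(-(-(1:ℝ)/2)), (fourier (-n)) ((x : ℝ) : AddCircle (1:ℝ)) • g0 lam x := by
    rw [← intervalIntegral.integral_comp_neg]
  rw [this]
  norm_num

lemma summable_norm (lam : ℝ) (hlam : 0 < lam) :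
    Summable fun n : ℤ => ‖fourierCoeff (F lam) n‖ := by
  have hb : Summable fun n : ℤ => (4*lam+lam^2) * (1/(n:ℝ)^2) :=
    (summable_one_div_int_pow.mpr (by norm_num)).mul_left _
  apply Summable.of_norm_bounded_eventually hb
  rw [Filter.eventually_cofinite]
  apply Set.Finite.subset (Set.finite_singleton (0:ℤ))
  intro n hn
  simp only [Set.mem_setOf_eq] at hn
  rw [Set.mem_singleton_iff]
  by_contra h0
  apply hn
  rw [Real.norm_eq_abs, _root_.abs_of_nonneg (norm_nonneg _), coeff_eq]
  calc ‖fourierCoeffOn (h12) (g0 lam) n‖ ≤ (4*lam + lam^2) / (n:ℝ)^2 := decay lam hlam n h0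
    _ = (4*lam+lam^2) * (1/(n:ℝ)^2) := by rw [mul_one_div]


lemma fourier_sub (n : ℤ) (x y : AddCircle (1:ℝ)) :
    fourier n (x - y) = fourier n x * conj (fourier n y) := by
  rw [← fourier_neg', fourier_apply, fourier_apply, ← Circle.coe_mul, ← AddCircle.toCircle_add,
    smul_sub, sub_eq_add_neg]

lemma norm_fourier_pt (n : ℤ) (v : AddCircle (1:ℝ)) : ‖fourier n v‖ = 1 := Circle.norm_coe _

lemma summable_mul_fourier (Q : ℤ → ℝ) (hQ : Summable fun n => |Q n|) (v : AddCircle (1:ℝ)) :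
    Summable fun n : ℤ => (Q n : ℂ) * fourier n v := by
  apply Summable.of_norm
  refine hQ.congr fun n => ?_
  rw [norm_mul, Complex.norm_real, Real.norm_eq_abs, norm_fourier_pt, mul_one]

lemma aux_cont (Q : ℤ → ℝ) (hQ : Summable fun n => |Q n|) :
    Continuous (Function.uncurry
      fun x y : AddCircle (1:ℝ) => ∑' n : ℤ, (Q n : ℂ) * fourier n (x - y)) := by
  have : Continuous fun p : AddCircle (1:ℝ) × AddCircle (1:ℝ) =>
      ∑' n : ℤ, (Q n : ℂ) * fourier n (p.1 - p.2) := by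
    apply continuous_tsum ?_ hQ ?_
    · intro n
      exact continuous_const.mul ((map_continuous (fourier n)).comp
        (continuous_fst.sub continuous_snd))
    · intro n p
      rw [norm_mul, Complex.norm_real, Real.norm_eq_abs, norm_fourier_pt, mul_one]
  exact this

lemma aux_pd (Q : ℤ → ℝ) (hQ0 : ∀ n, 0 ≤ Q n) (hQ : Summable fun n => |Q n|)
    (N : ℕ) (x : Fin N → AddCircle (1:ℝ)) (c : Fin N → ℂ) :
    0 ≤ ∑ i, ∑ j, (starRingEnd ℂ) (c i) * c j *
      (∑' n : ℤ, (Q n : ℂ) * fourier n (x i - x j)) := by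
  set z : ℤ → ℂ := fun n => ∑ i, conj (c i) * fourier n (x i) with hz
  have hzconj : ∀ n, conj (z n) = ∑ j, c j * conj (fourier n (x j)) := by
    intro n
    rw [hz]
    rw [map_sum]
    exact Finset.sum_congr rfl fun j _ => by rw [map_mul, conj_conj]
  have key : (∑ i, ∑ j, (starRingEnd ℂ) (c i) * c j *
      (∑' n : ℤ, (Q n : ℂ) * fourier n (x i - x j)))
      = ((∑' n : ℤ, Q n * Complex.normSq (z n) : ℝ) : ℂ) := by
    calc (∑ i, ∑ j, (starRingEnd ℂ) (c i) * c j *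
          (∑' n : ℤ, (Q n : ℂ) * fourier n (x i - x j)))
        = ∑ i, ∑ j, ∑' n : ℤ,
            (starRingEnd ℂ) (c i) * c j * ((Q n : ℂ) * fourier n (x i - x j)) := by
          exact Finset.sum_congr rfl fun i _ => Finset.sum_congr rfl fun j _ =>
            (tsum_mul_left).symm
      _ = ∑ i, ∑' n : ℤ, ∑ j,
            (starRingEnd ℂ) (c i) * c j * ((Q n : ℂ) * fourier n (x i - x j)) :=
          Finset.sum_congr rfl fun i _ => (Summable.tsum_finsetSum fun j _ =>
            ((summable_mul_fourier Q hQ (x i - x j)).mul_left _)).symm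
      _ = ∑' n : ℤ, ∑ i, ∑ j,
            (starRingEnd ℂ) (c i) * c j * ((Q n : ℂ) * fourier n (x i - x j)) :=
          (Summable.tsum_finsetSum fun i _ => summable_sum fun j _ =>
            ((summable_mul_fourier Q hQ (x i - x j)).mul_left _)).symm
      _ = ∑' n : ℤ, ((Q n * Complex.normSq (z n) : ℝ) : ℂ) := by
          refine tsum_congr fun n => ?_
          calc (∑ i, ∑ j, (starRingEnd ℂ) (c i) * c j * ((Q n : ℂ) * fourier n (x i - x j)))
              = ∑ i, ∑ j, (Q n : ℂ) *
                  ((conj (c i) * fourier n (x i)) * (c j * conj (fourier n (x j)))) := by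
                refine Finset.sum_congr rfl fun i _ => Finset.sum_congr rfl fun j _ => ?_
                rw [fourier_sub]
                ring
            _ = (Q n : ℂ) * ((∑ i, conj (c i) * fourier n (x i)) *
                  (∑ j, c j * conj (fourier n (x j)))) := by
                rw [Finset.sum_mul_sum]
                simp_rw [Finset.mul_sum]
            _ = (Q n : ℂ) * (z n * conj (z n)) := by rw [hzconj n, hz]
            _ = ((Q n * Complex.normSq (z n) : ℝ) : ℂ) := by
                rw [Complex.mul_conj, ← Complex.ofReal_mul]
      _ = ((∑' n : ℤ, Q n * Complex.normSq (z n) : ℝ) : ℂ) := (Complex.ofReal_tsum _).symm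
  rw [key, Complex.zero_le_real]
  exact tsum_nonneg fun n => mul_nonneg (hQ0 n) (Complex.normSq_nonneg _)


end GKPD
end

/-- the Gaussian kernel `exp(-λ d(x,y)²)` on the circle `ℝ/ℤ` (with the
quotient metric) admits a positive decomposition into continuous positive definite
kernels, for every `λ > 0`. -/
theorem gaussian_kernel_positive_decomposition_on_circle
    (lam : ℝ) (hlam : 0 < lam) :
    ∃ kp km : AddCircle (1 : ℝ) → AddCircle (1 : ℝ) → ℂ,
      Continuous (Function.uncurry kp) ∧ IsPDKernel kp ∧
      Continuous (Function.uncurry km) ∧ IsPDKernel km ∧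
      ∀ x y : AddCircle (1 : ℝ),
        (Real.exp (-lam * dist x y ^ 2) : ℂ) = kp x y - km x y := by
  classical
  have hFc : Continuous (GKPD.F lam) := by
    unfold GKPD.F
    fun_prop
  set a : ℤ → ℂ := fourierCoeff (GKPD.F lam) with ha
  have hnorm : Summable fun n : ℤ => ‖a n‖ := GKPD.summable_norm lam hlam
  have hreal : ∀ n, ((a n).re : ℂ) = a n := by
    intro n
    refine Complex.conj_eq_iff_re.mp ?_
    rw [ha, GKPD.coeff_eq]
    exact GKPD.coeff_real lam n
  set P : ℤ → ℝ := fun n => max (a n).re 0 with hP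
  set M : ℤ → ℝ := fun n => max (-(a n).re) 0 with hM
  have hPabs : ∀ n, |P n| ≤ ‖a n‖ := by
    intro n
    rw [abs_of_nonneg (le_max_right _ _)]
    refine max_le ((le_abs_self _).trans ?_) (norm_nonneg _)
    exact Complex.abs_re_le_norm _
  have hMabs : ∀ n, |M n| ≤ ‖a n‖ := by
    intro n
    rw [abs_of_nonneg (le_max_right _ _)]
    refine max_le ((neg_le_abs _).trans ?_) (norm_nonneg _)
    exact Complex.abs_re_le_norm _
  have hPs : Summable fun n => |P n| :=
    Summable.of_norm_bounded hnorm (fun n => by rw [Real.norm_eq_abs, abs_abs]; exact hPabs n)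
  have hMs : Summable fun n => |M n| :=
    Summable.of_norm_bounded hnorm (fun n => by rw [Real.norm_eq_abs, abs_abs]; exact hMabs n)
  refine ⟨fun x y => ∑' n : ℤ, (P n : ℂ) * fourier n (x - y),
      fun x y => ∑' n : ℤ, (M n : ℂ) * fourier n (x - y),
      GKPD.aux_cont P hPs, ?_, GKPD.aux_cont M hMs, ?_, ?_⟩
  · exact fun N x c => GKPD.aux_pd P (fun n => le_max_right _ _) hPs N x c
  · exact fun N x c => GKPD.aux_pd M (fun n => le_max_right _ _) hMs N x c
  · intro x y
    have hsP := GKPD.summable_mul_fourier P hPs (x - y)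
    have hsM := GKPD.summable_mul_fourier M hMs (x - y)
    have hdiff : (∑' n : ℤ, (P n : ℂ) * fourier n (x - y))
          - (∑' n : ℤ, (M n : ℂ) * fourier n (x - y))
        = ∑' n : ℤ, a n * fourier n (x - y) := by
      rw [← Summable.tsum_sub hsP hsM]
      refine tsum_congr fun n => ?_
      rw [← sub_mul]
      congr 1
      rw [← Complex.ofReal_sub]
      have : P n - M n = (a n).re := max_zero_sub_max_neg_zero_eq_self _
      rw [this, hreal n]
    have hFsum := (has_pointwise_sum_fourier_series_of_summable
      (f := ⟨GKPD.F lam, hFc⟩) (hnorm.of_norm) (x - y)).tsum_eq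
    simp only [smul_eq_mul] at hFsum
    have hfinal : (∑' n : ℤ, a n * fourier n (x - y)) = GKPD.F lam (x - y) := hFsum
    rw [hdiff, hfinal]
    rw [dist_eq_norm]
    rfl
end

section
/- Let n, m ∈ ℕ, let G = ℝⁿ × (ℝ/ℤ)ᵐ, and equip G with the product distance whose square is d((x,u),(y,v))² = ∑ᵢ |xᵢ − yᵢ|² + ∑ⱼ d_{S¹}(uⱼ, vⱼ)², where d_{S¹} is the quotient metric on ℝ/ℤ. Then for any λ > 0, the Gaussian kernel k((x,u),(y,v)) = exp(−λ d((x,u),(y,v))²) admits a positive decomposition into continuous positive definite kernels on G. -/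
open scoped ComplexOrder

/-- The squared product distance on `ℝⁿ × (ℝ/ℤ)ᵐ`:
`d((x,u),(y,v))² = ∑ᵢ |xᵢ − yᵢ|² + ∑ⱼ d_{S¹}(uⱼ, vⱼ)²`. -/
noncomputable def distSq (n m : ℕ)
    (a b : (Fin n → ℝ) × (Fin m → AddCircle (1 : ℝ))) : ℝ :=
  ∑ i, |a.1 i - b.1 i| ^ 2 + ∑ j, dist (a.2 j) (b.2 j) ^ 2

namespace PDAux

/-- Real symmetric positive semidefinite kernel. -/
def RPD {X : Type*} (k : X → X → ℝ) : Prop :=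
  (∀ x y, k x y = k y x) ∧
  ∀ (N : ℕ) (x : Fin N → X) (c : Fin N → ℝ),
    0 ≤ ∑ i, ∑ j, c i * c j * k (x i) (x j)

variable {X : Type*}

lemma RPD.const {c : ℝ} (hc : 0 ≤ c) : RPD (fun (_ _ : X) => c) := by
  refine ⟨fun _ _ => rfl, fun N x v => ?_⟩
  have : ∑ i, ∑ j, v i * v j * c = (∑ i, v i) * (∑ j, v j) * c := by
    rw [Finset.sum_mul_sum, Finset.sum_mul]
    exact Finset.sum_congr rfl fun i _ => by rw [Finset.sum_mul]
  rw [this, ← sq]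
  positivity

lemma RPD.add {k₁ k₂ : X → X → ℝ} (h₁ : RPD k₁) (h₂ : RPD k₂) :
    RPD (fun x y => k₁ x y + k₂ x y) := by
  refine ⟨fun x y => by dsimp only; rw [h₁.1, h₂.1], fun N x c => ?_⟩
  have := add_nonneg (h₁.2 N x c) (h₂.2 N x c)
  simpa [mul_add, Finset.sum_add_distrib] using this

lemma RPD.smul {k : X → X → ℝ} (h : RPD k) {c : ℝ} (hc : 0 ≤ c) :
    RPD (fun x y => c * k x y) := by
  refine ⟨fun x y => by dsimp only; rw [h.1], fun N x v => ?_⟩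
  have := mul_nonneg hc (h.2 N x v)
  rw [Finset.mul_sum] at this
  refine this.trans_eq (Eq.symm ?_)
  refine Finset.sum_congr rfl fun i _ => ?_
  rw [Finset.mul_sum]
  exact Finset.sum_congr rfl fun j _ => by ring

lemma RPD.comp {Y : Type*} {k : X → X → ℝ} (h : RPD k) (f : Y → X) :
    RPD (fun x y => k (f x) (f y)) :=
  ⟨fun x y => h.1 _ _, fun N x c => h.2 N (f ∘ x) c⟩

/-- conjugation by a function -/
lemma RPD.conj {k : X → X → ℝ} (h : RPD k) (g : X → ℝ) :
    RPD (fun x y => g x * k x y * g y) := by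
  refine ⟨fun x y => by dsimp only; rw [h.1]; ring, fun N x c => ?_⟩
  have := h.2 N x (fun i => c i * g (x i))
  convert this using 1
  refine Finset.sum_congr rfl fun i _ => Finset.sum_congr rfl fun j _ => by ring

open scoped MatrixOrder in
lemma RPD.mul {k₁ k₂ : X → X → ℝ} (h₁ : RPD k₁) (h₂ : RPD k₂) :
    RPD (fun x y => k₁ x y * k₂ x y) := by
  classical
  refine ⟨fun x y => by dsimp only; rw [h₁.1, h₂.1], fun N x c => ?_⟩
  set A : Matrix (Fin N) (Fin N) ℝ := Matrix.of fun i j => k₁ (x i) (x j) with hA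
  have hPSD : A.PosSemidef := by
    rw [Matrix.posSemidef_iff_dotProduct_mulVec]
    constructor
    · ext i j
      simp only [Matrix.conjTranspose_apply, Matrix.of_apply, hA, star_trivial]
      exact h₁.1 _ _
    · intro v
      have h := h₁.2 N x v
      simp only [dotProduct, Matrix.mulVec, Pi.star_apply, star_trivial]
      refine h.trans_eq (Eq.symm ?_)
      refine Finset.sum_congr rfl fun i _ => ?_
      rw [Finset.mul_sum]
      refine Finset.sum_congr rfl fun j _ => ?_
      simp only [hA, Matrix.of_apply, dotProduct]
      ring
  set S := CFC.sqrt A with hSdef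
  have hS : S * S = A := CFC.sqrt_mul_sqrt_self A hPSD.nonneg
  have hSsymm : ∀ t i : Fin N, S i t = S t i := by
    intro t i
    have h2 := congrArg (fun M : Matrix (Fin N) (Fin N) ℝ => M i t) (Matrix.nonneg_iff_posSemidef.mp (CFC.sqrt_nonneg A)).1
    simp only [Matrix.conjTranspose_apply, star_trivial] at h2
    exact h2.symm
  have key : ∀ i j, k₁ (x i) (x j) = ∑ t, S t i * S t j := by
    intro i j
    have h := congrArg (fun M : Matrix (Fin N) (Fin N) ℝ => M i j) hS
    simp only [Matrix.mul_apply, hA, Matrix.of_apply] at h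
    rw [← h]
    exact Finset.sum_congr rfl fun t _ => by rw [hSsymm t i]
  have e1 : (∑ i, ∑ j, c i * c j * (k₁ (x i) (x j) * k₂ (x i) (x j)))
      = ∑ t, ∑ i, ∑ j, (c i * S t i) * (c j * S t j) * k₂ (x i) (x j) := by
    calc (∑ i, ∑ j, c i * c j * (k₁ (x i) (x j) * k₂ (x i) (x j)))
        = ∑ i, ∑ j, ∑ t, (c i * S t i) * (c j * S t j) * k₂ (x i) (x j) := by
          refine Finset.sum_congr rfl fun i _ => Finset.sum_congr rfl fun j _ => ?_
          rw [key i j, Finset.sum_mul, Finset.mul_sum]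
          exact Finset.sum_congr rfl fun t _ => by ring
      _ = ∑ i, ∑ t, ∑ j, (c i * S t i) * (c j * S t j) * k₂ (x i) (x j) :=
          Finset.sum_congr rfl fun i _ => Finset.sum_comm
      _ = ∑ t, ∑ i, ∑ j, (c i * S t i) * (c j * S t j) * k₂ (x i) (x j) := Finset.sum_comm
  rw [e1]
  exact Finset.sum_nonneg fun t _ => h₂.2 N x fun i => c i * S t i

lemma RPD.pow {k : X → X → ℝ} (h : RPD k) (n : ℕ) :
    RPD (fun x y => k x y ^ n) := by
  induction n with
  | zero => simpa using RPD.const (le_of_lt one_pos)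
  | succ n ih =>
      have hm := ih.mul h
      have he : (fun x y => k x y ^ (n + 1)) = fun x y => k x y ^ n * k x y := by
        funext x y; rw [pow_succ]
      rw [he]; exact hm

lemma RPD.tsum {k : ℕ → X → X → ℝ} (h : ∀ n, RPD (k n))
    (hs : ∀ x y, Summable fun n => k n x y) :
    RPD (fun x y => ∑' n, k n x y) := by
  refine ⟨fun x y => by dsimp only; exact tsum_congr fun n => (h n).1 x y, fun N x c => ?_⟩
  have e : (∑ i, ∑ j, c i * c j * ∑' n, k n (x i) (x j))
      = ∑' n, ∑ i, ∑ j, c i * c j * k n (x i) (x j) := by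
    calc (∑ i, ∑ j, c i * c j * ∑' n, k n (x i) (x j))
        = ∑ i, ∑ j, ∑' n, c i * c j * k n (x i) (x j) :=
          Finset.sum_congr rfl fun i _ => Finset.sum_congr rfl fun j _ =>
            ((hs (x i) (x j)).tsum_mul_left (c i * c j)).symm
      _ = ∑ i, ∑' n, ∑ j, c i * c j * k n (x i) (x j) :=
          Finset.sum_congr rfl fun i _ =>
            (Summable.tsum_finsetSum fun j _ => (hs (x i) (x j)).mul_left _).symm
      _ = ∑' n, ∑ i, ∑ j, c i * c j * k n (x i) (x j) :=
          (Summable.tsum_finsetSum fun i _ => summable_sum fun j _ => (hs (x i) (x j)).mul_left _).symm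
  rw [e]
  exact tsum_nonneg fun n => (h n).2 N x c

/-- inner product kernel on `Fin n → ℝ` -/
lemma rpd_inner {n : ℕ} : RPD (fun x y : Fin n → ℝ => ∑ i, x i * y i) := by
  refine ⟨fun x y => Finset.sum_congr rfl fun i _ => mul_comm _ _, fun N x c => ?_⟩
  have e : (∑ i, ∑ j, c i * c j * ∑ t, x i t * x j t)
      = ∑ t, (∑ i, c i * x i t) ^ 2 := by
    calc (∑ i, ∑ j, c i * c j * ∑ t, x i t * x j t)
        = ∑ i, ∑ j, ∑ t, (c i * x i t) * (c j * x j t) := by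
          refine Finset.sum_congr rfl fun i _ => Finset.sum_congr rfl fun j _ => ?_
          rw [Finset.mul_sum]
          exact Finset.sum_congr rfl fun t _ => by ring
      _ = ∑ i, ∑ t, ∑ j, (c i * x i t) * (c j * x j t) :=
          Finset.sum_congr rfl fun i _ => Finset.sum_comm
      _ = ∑ t, ∑ i, ∑ j, (c i * x i t) * (c j * x j t) := Finset.sum_comm
      _ = ∑ t, (∑ i, c i * x i t) ^ 2 := by
          refine Finset.sum_congr rfl fun t _ => ?_
          rw [sq, Finset.sum_mul_sum]
  rw [e]
  exact Finset.sum_nonneg fun t _ => sq_nonneg _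

lemma RPD.zero : RPD (fun _ _ : X => (0:ℝ)) := RPD.const le_rfl

/-- decomposable kernel: difference of two continuous RPD kernels. -/
def Decomp {X : Type*} [TopologicalSpace X] (k : X → X → ℝ) : Prop :=
  ∃ p q : X → X → ℝ, Continuous (Function.uncurry p) ∧ RPD p ∧
    Continuous (Function.uncurry q) ∧ RPD q ∧ ∀ a b, k a b = p a b - q a b

lemma Decomp.of_rpd [TopologicalSpace X] {k : X → X → ℝ} (h : RPD k)
    (hc : Continuous (Function.uncurry k)) : Decomp k :=
  ⟨k, fun _ _ => 0, hc, h, continuous_const, RPD.zero, fun a b => by ring⟩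

lemma Decomp.mul [TopologicalSpace X] {k₁ k₂ : X → X → ℝ}
    (h₁ : Decomp k₁) (h₂ : Decomp k₂) : Decomp (fun a b => k₁ a b * k₂ a b) := by
  obtain ⟨p₁, q₁, cp₁, hp₁, cq₁, hq₁, e₁⟩ := h₁
  obtain ⟨p₂, q₂, cp₂, hp₂, cq₂, hq₂, e₂⟩ := h₂
  refine ⟨fun a b => p₁ a b * p₂ a b + q₁ a b * q₂ a b,
          fun a b => p₁ a b * q₂ a b + q₁ a b * p₂ a b, ?_, ?_, ?_, ?_, ?_⟩
  · exact (cp₁.mul cp₂).add (cq₁.mul cq₂)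
  · exact (hp₁.mul hp₂).add (hq₁.mul hq₂)
  · exact (cp₁.mul cq₂).add (cq₁.mul cp₂)
  · exact (hp₁.mul hq₂).add (hq₁.mul hp₂)
  · intro a b; dsimp only; rw [e₁ a b, e₂ a b]; ring

lemma Decomp.finprod [TopologicalSpace X] {ι : Type*} (s : Finset ι) (k : ι → X → X → ℝ)
    (h : ∀ j ∈ s, Decomp (k j)) : Decomp (fun a b => ∏ j ∈ s, k j a b) := by
  classical
  induction s using Finset.cons_induction with
  | empty =>
      simp only [Finset.prod_empty]
      exact Decomp.of_rpd (RPD.const zero_le_one) continuous_const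
  | cons j s hj ih =>
      simp only [Finset.prod_cons]
      exact (h j (Finset.mem_cons_self j s)).mul
        (ih fun i hi => h i (Finset.mem_cons_of_mem hi))

/-- A real symmetric PSD kernel gives a complex PD kernel. -/
lemma RPD.isPDKernel {X : Type} {k : X → X → ℝ} (h : RPD k) :
    IsPDKernel (fun x y => (k x y : ℂ)) := by
  intro N x c
  rw [Complex.le_def]
  constructor
  · have hre : (∑ i, ∑ j, (starRingEnd ℂ) (c i) * c j * ((k (x i) (x j) : ℝ) : ℂ)).re
        = (∑ i, ∑ j, (c i).re * (c j).re * k (x i) (x j))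
          + ∑ i, ∑ j, (c i).im * (c j).im * k (x i) (x j) := by
      rw [Complex.re_sum, ← Finset.sum_add_distrib]
      refine Finset.sum_congr rfl fun i _ => ?_
      rw [Complex.re_sum, ← Finset.sum_add_distrib]
      refine Finset.sum_congr rfl fun j _ => ?_
      simp only [Complex.mul_re, Complex.mul_im, Complex.conj_re, Complex.conj_im,
        Complex.ofReal_re, Complex.ofReal_im]
      ring
    simp only [Complex.zero_re]
    rw [hre]
    exact add_nonneg (h.2 N x fun i => (c i).re) (h.2 N x fun i => (c i).im)
  · have him : (∑ i, ∑ j, (starRingEnd ℂ) (c i) * c j * ((k (x i) (x j) : ℝ) : ℂ)).im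
        = (∑ i, ∑ j, (c i).re * (c j).im * k (x i) (x j))
          - ∑ i, ∑ j, (c i).im * (c j).re * k (x i) (x j) := by
      rw [Complex.im_sum, ← Finset.sum_sub_distrib]
      refine Finset.sum_congr rfl fun i _ => ?_
      rw [Complex.im_sum, ← Finset.sum_sub_distrib]
      refine Finset.sum_congr rfl fun j _ => ?_
      simp only [Complex.mul_re, Complex.mul_im, Complex.conj_re, Complex.conj_im,
        Complex.ofReal_re, Complex.ofReal_im]
      ring
    have hT : (∑ i, ∑ j, (c i).re * (c j).im * k (x i) (x j))
        = ∑ i, ∑ j, (c i).im * (c j).re * k (x i) (x j) := by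
      rw [Finset.sum_comm]
      refine Finset.sum_congr rfl fun i _ => Finset.sum_congr rfl fun j _ => ?_
      rw [h.1 (x j) (x i)]
      ring
    simp only [Complex.zero_im]
    rw [him, hT, sub_self]

lemma RPD.exp_smul {k : X → X → ℝ} (h : RPD k) {t : ℝ} (ht : 0 ≤ t) :
    RPD (fun x y => Real.exp (t * k x y)) := by
  have key : ∀ x y : X, Real.exp (t * k x y)
      = ∑' N : ℕ, (t ^ N / N.factorial) * k x y ^ N := by
    intro x y
    rw [Real.exp_eq_exp_ℝ, NormedSpace.exp_eq_tsum_div]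
    exact tsum_congr fun N => by rw [mul_pow]; ring
  have hsum : ∀ x y : X, Summable fun N : ℕ => (t ^ N / N.factorial) * k x y ^ N := by
    intro x y
    refine (Real.summable_pow_div_factorial (t * k x y)).congr fun N => ?_
    rw [mul_pow]; ring
  have hR := RPD.tsum (k := fun N x y => (t ^ N / N.factorial) * k x y ^ N)
    (fun N => (h.pow N).smul (by positivity)) hsum
  refine ⟨fun x y => by dsimp only; rw [h.1], fun N x c => ?_⟩
  have h2 := hR.2 N x c
  convert h2 using 1
  exact Finset.sum_congr rfl fun i _ => Finset.sum_congr rfl fun j _ => by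
    dsimp only; rw [key]

lemma RPD.cosh_smul {k : X → X → ℝ} (h : RPD k) (t : ℝ) :
    RPD (fun x y => Real.cosh (t * k x y)) := by
  have key : ∀ x y : X, Real.cosh (t * k x y)
      = ∑' N : ℕ, (t ^ (2 * N) / (2 * N).factorial) * k x y ^ (2 * N) := by
    intro x y
    rw [Real.cosh_eq_tsum]
    exact tsum_congr fun N => by rw [mul_pow]; ring
  have hsum : ∀ x y : X, Summable fun N : ℕ =>
      (t ^ (2 * N) / (2 * N).factorial) * k x y ^ (2 * N) := by
    intro x y
    refine (Real.hasSum_cosh (t * k x y)).summable.congr fun N => ?_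
    rw [mul_pow]; ring
  have hR := RPD.tsum (k := fun N x y => (t ^ (2 * N) / (2 * N).factorial) * k x y ^ (2 * N))
    (fun N => (h.pow (2 * N)).smul (div_nonneg (by rw [pow_mul]; positivity) (Nat.cast_nonneg _))) hsum
  refine ⟨fun x y => by dsimp only; rw [h.1], fun N x c => ?_⟩
  have h2 := hR.2 N x c
  convert h2 using 1
  exact Finset.sum_congr rfl fun i _ => Finset.sum_congr rfl fun j _ => by
    dsimp only; rw [key]

lemma RPD.sinh_smul {k : X → X → ℝ} (h : RPD k) {t : ℝ} (ht : 0 ≤ t) :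
    RPD (fun x y => Real.sinh (t * k x y)) := by
  have key : ∀ x y : X, Real.sinh (t * k x y)
      = ∑' N : ℕ, (t ^ (2 * N + 1) / (2 * N + 1).factorial) * k x y ^ (2 * N + 1) := by
    intro x y
    rw [Real.sinh_eq_tsum]
    exact tsum_congr fun N => by rw [mul_pow]; ring
  have hsum : ∀ x y : X, Summable fun N : ℕ =>
      (t ^ (2 * N + 1) / (2 * N + 1).factorial) * k x y ^ (2 * N + 1) := by
    intro x y
    refine (Real.hasSum_sinh (t * k x y)).summable.congr fun N => ?_
    rw [mul_pow]; ring
  have hR := RPD.tsum (k := fun N x y => (t ^ (2 * N + 1) / (2 * N + 1).factorial)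
      * k x y ^ (2 * N + 1))
    (fun N => (h.pow (2 * N + 1)).smul (div_nonneg (pow_nonneg ht _) (Nat.cast_nonneg _))) hsum
  refine ⟨fun x y => by dsimp only; rw [h.1], fun N x c => ?_⟩
  have h2 := hR.2 N x c
  convert h2 using 1
  exact Finset.sum_congr rfl fun i _ => Finset.sum_congr rfl fun j _ => by
    dsimp only; rw [key]

/-- the Gaussian kernel on `Fin n → ℝ` is RPD -/
lemma rpd_gauss {n : ℕ} {lam : ℝ} (hlam : 0 ≤ lam) :
    RPD (fun x y : Fin n → ℝ => Real.exp (-lam * ∑ i, (x i - y i) ^ 2)) := by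
  have hE : RPD (fun x y : Fin n → ℝ => Real.exp ((2 * lam) * ∑ i, x i * y i)) :=
    rpd_inner.exp_smul (by linarith)
  have hC := hE.conj fun x => Real.exp (-lam * ∑ i, x i ^ 2)
  have key : ∀ x y : Fin n → ℝ, Real.exp (-lam * ∑ i, (x i - y i) ^ 2)
      = Real.exp (-lam * ∑ i, x i ^ 2) * Real.exp ((2 * lam) * ∑ i, x i * y i)
        * Real.exp (-lam * ∑ i, y i ^ 2) := by
    intro x y
    rw [← Real.exp_add, ← Real.exp_add]
    congr 1
    have e1 : (∑ i, (x i - y i) ^ 2)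
        = ∑ i, (x i ^ 2 - 2 * (x i * y i) + y i ^ 2) :=
      Finset.sum_congr rfl fun i _ => by ring
    rw [e1, Finset.sum_add_distrib, Finset.sum_sub_distrib, ← Finset.mul_sum]
    ring
  refine ⟨fun x y => by dsimp only; congr 1; rw [Finset.sum_congr rfl fun i _ => (by ring :
    (x i - y i) ^ 2 = (y i - x i) ^ 2)], fun N x c => ?_⟩
  have h2 := hC.2 N x c
  convert h2 using 1
  exact Finset.sum_congr rfl fun i _ => Finset.sum_congr rfl fun j _ => by
    dsimp only; rw [key]

/-- the basic PD kernel on the circle -/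
noncomputable def Pker (u v : AddCircle (1:ℝ)) : ℝ := 1 / 2 - dist u v

lemma cont_Pker : Continuous (Function.uncurry Pker) := by
  have : Function.uncurry Pker = fun p : AddCircle (1:ℝ) × AddCircle (1:ℝ) =>
      1 / 2 - dist p.1 p.2 := rfl
  rw [this]
  exact continuous_const.sub continuous_dist


section Circle
open MeasureTheory Set

lemma norm_lt_quarter_iff {w : ℝ} (h1 : -(3/4) < w) (h2 : w ≤ 3/4) :
    ‖(w : AddCircle (1:ℝ))‖ < 1/4 ↔ |w| < 1/4 := by
  have hn : ‖(w : AddCircle (1:ℝ))‖ = |w - round w| := by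
    rw [AddCircle.norm_eq]; norm_num
  have hfl : round w = ⌊w + 1/2⌋ := round_eq w
  have h3 : (round w : ℝ) ≤ w + 1/2 := by rw [hfl]; exact Int.floor_le _
  have h4 : w + 1/2 < (round w : ℝ) + 1 := by rw [hfl]; exact Int.lt_floor_add_one _
  have hr1 : (-1 : ℤ) ≤ round w := by
    have hcast : ((-2 : ℤ) : ℝ) < (round w : ℝ) := by push_cast; linarith
    have h5 : (-2 : ℤ) < round w := by exact_mod_cast hcast
    omega
  have hr2 : round w ≤ 1 := by
    have hcast : ((round w : ℤ) : ℝ) < ((2:ℤ) : ℝ) := by push_cast; linarith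
    have h5 : round w < (2 : ℤ) := by exact_mod_cast hcast
    omega
  have hrr : round w = -1 ∨ round w = 0 ∨ round w = 1 := by omega
  rcases hrr with h | h | h <;> rw [h] at hn h3 h4 <;> push_cast at hn h3 h4 <;> rw [hn]
  · constructor <;> intro hc <;> exfalso <;> rw [abs_lt] at hc <;>
      [linarith [hc.1]; linarith [hc.1]]
  · norm_num
  · constructor <;> intro hc <;> exfalso <;> rw [abs_lt] at hc <;>
      [linarith [hc.2]; linarith [hc.2]]

/-- indicator of the open arc of radius 1/4 around `u` -/
noncomputable def arcInd (u : AddCircle (1:ℝ)) : AddCircle (1:ℝ) → ℝ :=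
  (Metric.ball u (1/4 : ℝ)).indicator fun _ => 1

lemma arcInd_apply (u t : AddCircle (1:ℝ)) :
    arcInd u t = if dist t u < 1/4 then 1 else 0 := by
  classical
  rw [arcInd, Set.indicator_apply]
  simp only [Metric.mem_ball]

lemma intCast_coe_zero (nn : ℤ) : ((nn : ℝ) : AddCircle (1:ℝ)) = 0 := by
  rw [AddCircle.coe_eq_zero_iff]
  exact ⟨nn, by simp⟩

lemma coe_sub_int (a : ℝ) (nn : ℤ) :
    ((a - nn : ℝ) : AddCircle (1:ℝ)) = (a : AddCircle (1:ℝ)) := by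
  rw [AddCircle.coe_sub, intCast_coe_zero, sub_zero]

lemma overlap (x s : ℝ) (hs0 : 0 ≤ s) (hs : s ≤ 1/2) :
    (∫ t : AddCircle (1:ℝ), arcInd (↑x) t * arcInd (↑(x + s)) t) = 1/2 - s := by
  haveI : Fact ((0:ℝ) < 1) := ⟨one_pos⟩
  have hwin := AddCircle.integral_preimage (T := 1) (x + s/2 - 1/2)
    (fun t => arcInd (↑x) t * arcInd (↑(x + s)) t)
  rw [← hwin]
  have heq : Set.EqOn (fun z : ℝ => arcInd (↑x) (↑z) * arcInd (↑(x + s)) (↑z))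
      ((Set.Ioo (x + s - 1/4) (x + 1/4)).indicator fun _ => 1)
      (Set.Ioc (x + s/2 - 1/2) (x + s/2 - 1/2 + 1)) := by
    intro z hz
    obtain ⟨hz1, hz2⟩ := hz
    have d1 : dist ((z : ℝ) : AddCircle (1:ℝ)) (↑x) = ‖((z - x : ℝ) : AddCircle (1:ℝ))‖ := by
      rw [dist_eq_norm, AddCircle.coe_sub]
    have d2 : dist ((z : ℝ) : AddCircle (1:ℝ)) (↑(x + s)) = ‖((z - (x + s) : ℝ) : AddCircle (1:ℝ))‖ := by
      rw [dist_eq_norm, AddCircle.coe_sub]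
    have i1 : ‖((z - x : ℝ) : AddCircle (1:ℝ))‖ < 1/4 ↔ |z - x| < 1/4 :=
      norm_lt_quarter_iff (by linarith) (by linarith)
    have i2 : ‖((z - (x + s) : ℝ) : AddCircle (1:ℝ))‖ < 1/4 ↔ |z - (x + s)| < 1/4 :=
      norm_lt_quarter_iff (by linarith) (by linarith)
    have hiff : (|z - x| < 1/4 ∧ |z - (x + s)| < 1/4) ↔ (x + s - 1/4 < z ∧ z < x + 1/4) := by
      rw [abs_lt, abs_lt]
      constructor
      · rintro ⟨⟨a1, a2⟩, b1, b2⟩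
        exact ⟨by linarith, by linarith⟩
      · rintro ⟨a1, a2⟩
        exact ⟨⟨by linarith, by linarith⟩, by linarith, by linarith⟩
    simp only [arcInd_apply, d1, d2, i1, i2, Set.indicator_apply, Set.mem_Ioo]
    rcases em (|z - x| < 1/4) with c1 | c1 <;> rcases em (|z - (x+s)| < 1/4) with c2 | c2
    · rw [if_pos c1, if_pos c2, if_pos (hiff.mp ⟨c1, c2⟩), one_mul]
    · rw [if_pos c1, if_neg c2, if_neg fun hm => c2 (hiff.mpr hm).2, one_mul]
    · rw [if_neg c1, if_neg fun hm => c1 (hiff.mpr hm).1, zero_mul]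
    · rw [if_neg c1, if_neg fun hm => c1 (hiff.mpr hm).1, zero_mul]
  rw [setIntegral_congr_fun measurableSet_Ioc heq]
  rw [integral_indicator measurableSet_Ioo, Measure.restrict_restrict measurableSet_Ioo]
  have hss : Set.Ioo (x + s - 1/4) (x + 1/4) ∩ Set.Ioc (x + s/2 - 1/2) (x + s/2 - 1/2 + 1)
      = Set.Ioo (x + s - 1/4) (x + 1/4) := by
    rw [Set.inter_eq_left]
    intro z hz
    exact ⟨by linarith [hz.1], by linarith [hz.2]⟩
  rw [hss, setIntegral_const, Real.volume_real_Ioo_of_le (by linarith), smul_eq_mul, mul_one]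
  ring

lemma overlap' (u v : AddCircle (1:ℝ)) :
    (∫ t : AddCircle (1:ℝ), arcInd u t * arcInd v t) = 1/2 - dist u v := by
  haveI : Fact ((0:ℝ) < 1) := ⟨one_pos⟩
  obtain ⟨x, rfl⟩ := QuotientAddGroup.mk_surjective u
  obtain ⟨y, rfl⟩ := QuotientAddGroup.mk_surjective v
  set s : ℝ := (y - x) - round (y - x) with hsdef
  have habs : |s| ≤ 1/2 := by
    have := abs_sub_round (y - x)
    rw [hsdef]; linarith [this]
  have hcoe : ((x + s : ℝ) : AddCircle (1:ℝ)) = (y : AddCircle (1:ℝ)) := by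
    have he : (x + s : ℝ) = y - (round (y - x) : ℤ) := by rw [hsdef]; push_cast; ring
    rw [he, coe_sub_int]
  have hdist : dist ((x : ℝ) : AddCircle (1:ℝ)) ((y : ℝ) : AddCircle (1:ℝ)) = |s| := by
    rw [← hcoe, dist_eq_norm, ← AddCircle.coe_sub,
      show x - (x + s) = -s by ring, AddCircle.coe_neg, norm_neg,
      (AddCircle.norm_coe_eq_abs_iff (1:ℝ) one_ne_zero).mpr (by rw [abs_one]; linarith)]
  rcases le_or_gt 0 s with hs0 | hs0
  · have h := overlap x s hs0 (by rw [abs_of_nonneg hs0] at habs; exact habs)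
    rw [hcoe] at h
    rw [hdist, abs_of_nonneg hs0]
    exact h
  · have h := overlap (x + s) (-s) (by linarith) (by rw [abs_of_neg hs0] at habs; exact habs)
    have hxx : (x + s) + -s = x := by ring
    rw [hxx, hcoe] at h
    rw [hdist, abs_of_neg hs0, ← h]
    exact integral_congr_ae (Filter.Eventually.of_forall fun t => mul_comm _ _)

lemma integrable_arcInd (u : AddCircle (1:ℝ)) :
    Integrable (arcInd u) := by
  haveI : Fact ((0:ℝ) < 1) := ⟨one_pos⟩
  exact (integrable_const (1:ℝ)).indicator Metric.isOpen_ball.measurableSet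

lemma rpd_Pker : RPD Pker := by
  haveI : Fact ((0:ℝ) < 1) := ⟨one_pos⟩
  refine ⟨fun u v => by unfold Pker; rw [dist_comm], fun N x c => ?_⟩
  have habs : ∀ u t : AddCircle (1:ℝ), |arcInd u t| ≤ 1 := by
    intro u t
    rw [arcInd_apply]
    split <;> norm_num
  have hint : ∀ i j : Fin N,
      Integrable (fun t => (c i * arcInd (x i) t) * (c j * arcInd (x j) t)) := by
    intro i j
    have h1 : Integrable (fun t => arcInd (x i) t * arcInd (x j) t) :=
      (integrable_arcInd (x j)).bdd_mul (integrable_arcInd (x i)).aestronglyMeasurable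
        (c := 1) (Filter.Eventually.of_forall fun t => by rw [Real.norm_eq_abs]; exact habs _ t)
    have h2 : (fun t => (c i * arcInd (x i) t) * (c j * arcInd (x j) t))
        = fun t => (c i * c j) * (arcInd (x i) t * arcInd (x j) t) := by
      funext t; ring
    rw [h2]
    exact h1.const_mul _
  have key : (∑ i, ∑ j, c i * c j * Pker (x i) (x j))
      = ∫ t, (∑ i, c i * arcInd (x i) t) ^ 2 := by
    have e1 : ∀ i j : Fin N, c i * c j * Pker (x i) (x j)
        = ∫ t, (c i * arcInd (x i) t) * (c j * arcInd (x j) t) := by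
      intro i j
      have h2 : (∫ t, (c i * arcInd (x i) t) * (c j * arcInd (x j) t))
          = ∫ t, (c i * c j) * (arcInd (x i) t * arcInd (x j) t) :=
        integral_congr_ae (Filter.Eventually.of_forall fun t => by ring)
      rw [h2, integral_const_mul, overlap']
      rfl
    calc (∑ i, ∑ j, c i * c j * Pker (x i) (x j))
        = ∑ i, ∑ j, ∫ t, (c i * arcInd (x i) t) * (c j * arcInd (x j) t) :=
          Finset.sum_congr rfl fun i _ => Finset.sum_congr rfl fun j _ => e1 i j
      _ = ∑ i, ∫ t, ∑ j, (c i * arcInd (x i) t) * (c j * arcInd (x j) t) :=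
          Finset.sum_congr rfl fun i _ =>
            (integral_finset_sum Finset.univ fun j _ => hint i j).symm
      _ = ∫ t, ∑ i, ∑ j, (c i * arcInd (x i) t) * (c j * arcInd (x j) t) :=
          (integral_finset_sum Finset.univ fun i _ =>
            integrable_finset_sum Finset.univ fun j _ => hint i j).symm
      _ = ∫ t, (∑ i, c i * arcInd (x i) t) ^ 2 := by
          refine integral_congr_ae (Filter.Eventually.of_forall fun t => ?_)
          dsimp only
          rw [sq, Finset.sum_mul_sum]
  rw [key]
  exact integral_nonneg fun t => sq_nonneg _

end Circle


/-- the circle factor decomposes -/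
lemma decomp_circle {lam : ℝ} (hlam : 0 ≤ lam) :
    Decomp (fun u v : AddCircle (1:ℝ) => Real.exp (-lam * dist u v ^ 2)) := by
  have hP := rpd_Pker
  have cP := cont_Pker
  have hexpP : RPD (fun u v => Real.exp (lam * Pker u v)) := hP.exp_smul hlam
  have hP2 : RPD (fun u v => Pker u v ^ 2) := hP.pow 2
  have hcosh : RPD (fun u v => Real.cosh (lam * Pker u v ^ 2)) := hP2.cosh_smul lam
  have hsinh : RPD (fun u v => Real.sinh (lam * Pker u v ^ 2)) := hP2.sinh_smul hlam
  have cexpP : Continuous (Function.uncurry fun u v => Real.exp (lam * Pker u v)) :=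
    Real.continuous_exp.comp (continuous_const.mul cP)
  have ccosh : Continuous (Function.uncurry fun u v => Real.cosh (lam * Pker u v ^ 2)) :=
    Real.continuous_cosh.comp (continuous_const.mul (cP.pow 2))
  have csinh : Continuous (Function.uncurry fun u v => Real.sinh (lam * Pker u v ^ 2)) :=
    Real.continuous_sinh.comp (continuous_const.mul (cP.pow 2))
  refine ⟨fun u v => Real.exp (-lam / 4) *
            (Real.exp (lam * Pker u v) * Real.cosh (lam * Pker u v ^ 2)),
          fun u v => Real.exp (-lam / 4) *
            (Real.exp (lam * Pker u v) * Real.sinh (lam * Pker u v ^ 2)), ?_, ?_, ?_, ?_, ?_⟩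
  · exact continuous_const.mul (cexpP.mul ccosh)
  · exact (hexpP.mul hcosh).smul (Real.exp_pos _).le
  · exact continuous_const.mul (cexpP.mul csinh)
  · exact (hexpP.mul hsinh).smul (Real.exp_pos _).le
  · intro u v
    dsimp only
    rw [← mul_sub, ← mul_sub, Real.cosh_sub_sinh, ← Real.exp_add, ← Real.exp_add]
    congr 1
    have hPd : Pker u v = 1 / 2 - dist u v := rfl
    rw [hPd]; ring

end PDAux

open PDAux

/-- the Gaussian kernel `exp(-λ d(·,·)²)` on `G = ℝⁿ × (ℝ/ℤ)ᵐ` (a model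
of an arbitrary connected Abelian Lie group), with the squared product distance,
admits a positive decomposition into continuous positive definite kernels, for every
`λ > 0`. -/
theorem gaussian_kernel_positive_decomposition_on_abelian_lie_group
    (n m : ℕ) (lam : ℝ) (hlam : 0 < lam) :
    ∃ kp km : (Fin n → ℝ) × (Fin m → AddCircle (1 : ℝ)) →
              (Fin n → ℝ) × (Fin m → AddCircle (1 : ℝ)) → ℂ,
      Continuous (Function.uncurry kp) ∧ IsPDKernel kp ∧
      Continuous (Function.uncurry km) ∧ IsPDKernel km ∧
      ∀ a b, (Real.exp (-lam * distSq n m a b) : ℂ) = kp a b - km a b := by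
  set G := (Fin n → ℝ) × (Fin m → AddCircle (1 : ℝ))
  have hgauss : RPD (fun a b : G => Real.exp (-lam * ∑ i, (a.1 i - b.1 i) ^ 2)) :=
    (rpd_gauss (n := n) hlam.le).comp fun a : G => a.1
  have cg : Continuous (Function.uncurry
      fun a b : G => Real.exp (-lam * ∑ i, (a.1 i - b.1 i) ^ 2)) := by
    apply Real.continuous_exp.comp
    apply continuous_const.mul
    apply continuous_finset_sum
    intro i _
    exact (((continuous_apply i).comp (continuous_fst.comp continuous_fst)).sub
      ((continuous_apply i).comp (continuous_fst.comp continuous_snd))).pow 2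
  have hcirc : ∀ j : Fin m, Decomp (fun a b : G =>
      Real.exp (-lam * dist (a.2 j) (b.2 j) ^ 2)) := by
    intro j
    have := decomp_circle hlam.le
    obtain ⟨p, q, cp, hp, cq, hq, e⟩ := this
    have hf : Continuous (fun a : G => a.2 j) := (continuous_apply j).comp continuous_snd
    exact ⟨fun a b => p (a.2 j) (b.2 j), fun a b => q (a.2 j) (b.2 j),
      cp.comp ((hf.comp continuous_fst).prodMk (hf.comp continuous_snd)),
      hp.comp fun a : G => a.2 j,
      cq.comp ((hf.comp continuous_fst).prodMk (hf.comp continuous_snd)),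
      hq.comp fun a : G => a.2 j,
      fun a b => e (a.2 j) (b.2 j)⟩
  have Dtot : Decomp (fun a b : G => (Real.exp (-lam * ∑ i, (a.1 i - b.1 i) ^ 2)) *
      ∏ j, Real.exp (-lam * dist (a.2 j) (b.2 j) ^ 2)) :=
    (Decomp.of_rpd hgauss cg).mul
      (Decomp.finprod Finset.univ _ fun j _ => hcirc j)
  have keyeq : ∀ a b : G, Real.exp (-lam * distSq n m a b)
      = (Real.exp (-lam * ∑ i, (a.1 i - b.1 i) ^ 2)) *
          ∏ j, Real.exp (-lam * dist (a.2 j) (b.2 j) ^ 2) := by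
    intro a b
    rw [← Real.exp_sum, ← Real.exp_add]
    congr 1
    have h1 : (∑ i, |a.1 i - b.1 i| ^ 2) = ∑ i, (a.1 i - b.1 i) ^ 2 :=
      Finset.sum_congr rfl fun i _ => sq_abs _
    rw [distSq, h1, mul_add]
    congr 1
    rw [Finset.mul_sum]
  obtain ⟨p, q, cp, hp, cq, hq, e⟩ := Dtot
  refine ⟨fun a b => (p a b : ℂ), fun a b => (q a b : ℂ), ?_, ?_, ?_, ?_, ?_⟩
  · exact Complex.continuous_ofReal.comp cp
  · exact hp.isPDKernel
  · exact Complex.continuous_ofReal.comp cq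
  · exact hq.isPDKernel
  · intro a b
    rw [← Complex.ofReal_sub]
    exact_mod_cast congrArg (fun r : ℝ => (r : ℂ)) ((keyeq a b).trans (e a b))
end
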